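/- arXiv:1807.10455 — 11 statements merged into one kernel-verified Lean document; each statement's English description precedes it below -/
import Mathlib

section
/- Let f : ℝ^d → ℝ be convex lower semicontinuous with Fenchel conjugate f*, let 𝒳 ⊆ ℝ^d be compact convex, and let g(x,y) = ⟨x,y⟩ − f*(y). Fix positive weights α_1, …, α_T with A_T = Σ_{t=1}^T α_t, and arbitrary sequences x_1, …, x_T ∈ 𝒳 and y_1, …, y_T ∈ ℝ^d. Define the weighted regrets Regret^y = Σ_{t=1}^T α_t ℓ_t(y_t) − inf_y Σ_{t=1}^T α_t ℓ_t(y) with ℓ_t(y) = f*(y) − ⟨x_t, y⟩, and Regret^x = Σ_{t=1}^T α_t h_t(x_t) − min_{x ∈ 𝒳} Σ_{t=1}^T α_t h_t(x) with h_t(x) = ⟨x, y_t⟩ − f*(y_t). Then the weighted averages x̄_T = (1/A_T) Σ_{t=1}^T α_t x_t and ȳ_T = (1/A_T) Σ_{t=1}^T α_t y_t form an ε-equilibrium of g with ε = (Regret^x + Regret^y)/A_T; in particular sup_y g(x̄_T, y) − inf_{x ∈ 𝒳} g(x, ȳ_T) ≤ (Regret^x + Regret^y)/A_T. -/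
open scoped RealInnerProductSpace
open Finset

/-- No-regret dynamics produce an approximate equilibrium of the Fenchel game:
the weighted averages `(x̄_T, ȳ_T)` satisfy
`sup_y g(x̄_T, y) - inf_{x ∈ 𝒳} g(x, ȳ_T) ≤ (Regret^x + Regret^y) / A_T`. -/
theorem weighted_regret_to_equilibrium {d : ℕ}
    (f fstar : EuclideanSpace ℝ (Fin d) → ℝ)
    (X : Set (EuclideanSpace ℝ (Fin d)))
    (hconv : ConvexOn ℝ Set.univ f)
    (hlsc : LowerSemicontinuous f)
    (hXcomp : IsCompact X) (hXconv : Convex ℝ X)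
    (hfstar : ∀ y, IsLUB (Set.range fun x => ⟪x, y⟫ - f x) (fstar y))
    (g : EuclideanSpace ℝ (Fin d) → EuclideanSpace ℝ (Fin d) → ℝ)
    (hg : ∀ x y, g x y = ⟪x, y⟫ - fstar y)
    (T : ℕ) (hT : 1 ≤ T)
    (α : ℕ → ℝ) (hα : ∀ t ∈ Icc 1 T, 0 < α t)
    (A : ℝ) (hA : A = ∑ t ∈ Icc 1 T, α t)
    (x y : ℕ → EuclideanSpace ℝ (Fin d))
    (hxX : ∀ t ∈ Icc 1 T, x t ∈ X)
    -- Regret^y = Σ α_t ℓ_t(y_t) - inf_y Σ α_t ℓ_t(y), where ℓ_t(y) = f*(y) - ⟪x_t, y⟫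
    (Iy : ℝ)
    (hIy : IsGLB (Set.range fun z => ∑ t ∈ Icc 1 T, α t * (fstar z - ⟪x t, z⟫)) Iy)
    (Ry : ℝ)
    (hRy : Ry = (∑ t ∈ Icc 1 T, α t * (fstar (y t) - ⟪x t, y t⟫)) - Iy)
    -- Regret^x = Σ α_t h_t(x_t) - min_{x ∈ 𝒳} Σ α_t h_t(x), where h_t(x) = ⟪x, y_t⟫ - f*(y_t)
    (Ix : ℝ)
    (hIx : IsGLB ((fun z => ∑ t ∈ Icc 1 T, α t * (⟪z, y t⟫ - fstar (y t))) '' X) Ix)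
    (Rx : ℝ)
    (hRx : Rx = (∑ t ∈ Icc 1 T, α t * (⟪x t, y t⟫ - fstar (y t))) - Ix)
    -- the weighted averages
    (xbar ybar : EuclideanSpace ℝ (Fin d))
    (hxbar : xbar = A⁻¹ • ∑ t ∈ Icc 1 T, α t • x t)
    (hybar : ybar = A⁻¹ • ∑ t ∈ Icc 1 T, α t • y t)
    -- S = sup_y g(x̄_T, y), I = inf_{x ∈ 𝒳} g(x, ȳ_T)
    (S I : ℝ)
    (hS : IsLUB (Set.range fun z => g xbar z) S)
    (hI : IsGLB ((fun z => g z ybar) '' X) I) :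
    S - I ≤ (Rx + Ry) / A := by

  have hne : (1:ℕ) ∈ Icc 1 T := by simp [hT]
  have hApos : 0 < A := by
    rw [hA]; exact Finset.sum_pos hα ⟨1, hne⟩
  have hAinv : (0:ℝ) < A⁻¹ := by positivity
  -- generic identity: A⁻¹ * ∑ α t * (c t - K) = A⁻¹ * ∑ α t * c t - K
  have key : ∀ (c : ℕ → ℝ) (K : ℝ),
      A⁻¹ * ∑ t ∈ Icc 1 T, α t * (c t - K)
        = A⁻¹ * (∑ t ∈ Icc 1 T, α t * c t) - K := by
    intro c K
    have h1 : ∑ t ∈ Icc 1 T, α t * (c t - K)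
        = (∑ t ∈ Icc 1 T, α t * c t) - A * K := by
      rw [hA, Finset.sum_mul, ← Finset.sum_sub_distrib]
      exact Finset.sum_congr rfl (fun t _ => by ring)
    rw [h1, mul_sub, ← mul_assoc, inv_mul_cancel₀ hApos.ne', one_mul]
  -- g xbar z in terms of the sum
  have hgx : ∀ z, g xbar z = A⁻¹ * ∑ t ∈ Icc 1 T, α t * (⟪x t, z⟫ - fstar z) := by
    intro z
    rw [hg, key (fun t => ⟪x t, z⟫) (fstar z), hxbar]
    congr 1
    rw [real_inner_smul_left, sum_inner]
    congr 1
    exact Finset.sum_congr rfl (fun t _ => real_inner_smul_left _ _ _)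
  -- inner with ybar
  have hinnery : ∀ w : EuclideanSpace ℝ (Fin d),
      ⟪w, ybar⟫ = A⁻¹ * ∑ t ∈ Icc 1 T, α t * ⟪w, y t⟫ := by
    intro w
    rw [hybar, real_inner_smul_right, inner_sum]
    congr 1
    exact Finset.sum_congr rfl (fun t _ => real_inner_smul_right _ _ _)
  -- convexity of fstar at ybar
  have hfconv : fstar ybar ≤ A⁻¹ * ∑ t ∈ Icc 1 T, α t * fstar (y t) := by
    apply (hfstar ybar).2
    rintro _ ⟨w, rfl⟩
    dsimp only
    have h1 : ⟪w, ybar⟫ - f w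
        = A⁻¹ * ∑ t ∈ Icc 1 T, α t * (⟪w, y t⟫ - f w) := by
      rw [key (fun t => ⟪w, y t⟫) (f w), hinnery w]
    rw [h1]
    apply mul_le_mul_of_nonneg_left _ hAinv.le
    apply Finset.sum_le_sum
    intro t ht
    have := (hfstar (y t)).1 ⟨w, rfl⟩
    exact mul_le_mul_of_nonneg_left this (hα t ht).le
  -- S ≤ A⁻¹ * (-Iy)
  have hSle : S ≤ A⁻¹ * (-Iy) := by
    apply hS.2
    rintro _ ⟨z, rfl⟩
    have hb := hIy.1 ⟨z, rfl⟩
    have h2 : (∑ t ∈ Icc 1 T, α t * (⟪x t, z⟫ - fstar z))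
        = -(∑ t ∈ Icc 1 T, α t * (fstar z - ⟪x t, z⟫)) := by
      rw [← Finset.sum_neg_distrib]
      exact Finset.sum_congr rfl (fun t _ => by ring)
    dsimp only
    rw [hgx z, h2]
    exact mul_le_mul_of_nonneg_left (by linarith) hAinv.le
  -- A⁻¹ * Ix ≤ I
  have hIge : A⁻¹ * Ix ≤ I := by
    apply hI.2
    rintro _ ⟨z, hz, rfl⟩
    have hb := hIx.1 ⟨z, hz, rfl⟩
    have h3 : A⁻¹ * ∑ t ∈ Icc 1 T, α t * (⟪z, y t⟫ - fstar (y t)) ≤ g z ybar := by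
      rw [hg]
      have h4 : ∑ t ∈ Icc 1 T, α t * (⟪z, y t⟫ - fstar (y t))
          = (∑ t ∈ Icc 1 T, α t * ⟪z, y t⟫) - ∑ t ∈ Icc 1 T, α t * fstar (y t) := by
        rw [← Finset.sum_sub_distrib]
        exact Finset.sum_congr rfl (fun t _ => by ring)
      rw [h4, mul_sub, hinnery z]
      linarith [hfconv]
    calc A⁻¹ * Ix ≤ A⁻¹ * ∑ t ∈ Icc 1 T, α t * (⟪z, y t⟫ - fstar (y t)) :=
          mul_le_mul_of_nonneg_left hb hAinv.le
      _ ≤ g z ybar := h3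
  -- cancellation
  have hcancel : (∑ t ∈ Icc 1 T, α t * (⟪x t, y t⟫ - fstar (y t)))
      + (∑ t ∈ Icc 1 T, α t * (fstar (y t) - ⟪x t, y t⟫)) = 0 := by
    rw [← Finset.sum_add_distrib]
    exact Finset.sum_eq_zero (fun t _ => by ring)
  have hfinal : (Rx + Ry) / A = A⁻¹ * (-Iy) - A⁻¹ * Ix := by
    rw [hRx, hRy, div_eq_inv_mul]
    have : (∑ t ∈ Icc 1 T, α t * (⟪x t, y t⟫ - fstar (y t))) - Ix
        + ((∑ t ∈ Icc 1 T, α t * (fstar (y t) - ⟪x t, y t⟫)) - Iy) = -Ix - Iy := by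
      linarith [hcancel]
    rw [this]; ring
  rw [hfinal]
  linarith
end

section
/- Let ℓ_0, ℓ_1, …, ℓ_T : ℝ^m → ℝ be arbitrary functions and α_1, …, α_T > 0. Define δ_t(y) = α_t(ℓ_t(y) − ℓ_{t−1}(y)). Suppose for each t = 1, …, T the point ỹ_t minimizes y ↦ α_t ℓ_{t−1}(y) + Σ_{s=1}^{t−1} α_s ℓ_s(y) over ℝ^m (the Optimistic-FTL iterate) and for each t the point ŷ_{t+1} minimizes y ↦ Σ_{s=1}^{t} α_s ℓ_s(y) over ℝ^m (the FTL leader). Then the weighted regret of the Optimistic-FTL iterates satisfies Σ_{t=1}^T α_t ℓ_t(ỹ_t) − min_y Σ_{t=1}^T α_t ℓ_t(y) ≤ Σ_{t=1}^T (δ_t(ỹ_t) − δ_t(ŷ_{t+1})). -/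
open Finset

lemma optimistic_ftl_aux {m : ℕ}
    (ℓ : ℕ → EuclideanSpace ℝ (Fin m) → ℝ)
    (α : ℕ → ℝ)
    (δ : ℕ → EuclideanSpace ℝ (Fin m) → ℝ)
    (hδ : ∀ t y, δ t y = α t * (ℓ t y - ℓ (t - 1) y))
    (ytil yhat : ℕ → EuclideanSpace ℝ (Fin m))
    (T : ℕ)
    (hytil : ∀ t ∈ Icc 1 T, ∀ y,
      α t * ℓ (t - 1) (ytil t) + ∑ s ∈ Icc 1 (t - 1), α s * ℓ s (ytil t)
        ≤ α t * ℓ (t - 1) y + ∑ s ∈ Icc 1 (t - 1), α s * ℓ s y)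
    (hyhat : ∀ t ∈ Icc 1 T, ∀ y,
      ∑ s ∈ Icc 1 t, α s * ℓ s (yhat (t + 1)) ≤ ∑ s ∈ Icc 1 t, α s * ℓ s y) :
    ∑ t ∈ Icc 1 T, (α t * ℓ (t - 1) (ytil t) + δ t (yhat (t + 1)))
      ≤ ∑ t ∈ Icc 1 T, α t * ℓ t (yhat (T + 1)) := by
  induction T with
  | zero => simp
  | succ T ih =>
    have hsub : Icc 1 T ⊆ Icc 1 (T + 1) := Icc_subset_Icc_right (by omega)
    have ih' := ih (fun t ht y => hytil t (hsub ht) y) (fun t ht y => hyhat t (hsub ht) y)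
    rw [Finset.sum_Icc_succ_top (by omega : 1 ≤ T + 1),
        Finset.sum_Icc_succ_top (by omega : 1 ≤ T + 1)]
    have h1 : ∑ t ∈ Icc 1 T, α t * ℓ t (yhat (T + 1))
        ≤ ∑ t ∈ Icc 1 T, α t * ℓ t (ytil (T + 1)) := by
      rcases Nat.eq_zero_or_pos T with hT | hT
      · simp [hT]
      · exact hyhat T (by simp [hT]; omega) _
    have h2 := hytil (T + 1) (by simp) (yhat (T + 1 + 1))
    simp only [Nat.add_sub_cancel] at h2
    have h3 : δ (T + 1) (yhat (T + 1 + 1)) =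
        α (T + 1) * ℓ (T + 1) (yhat (T + 1 + 1)) - α (T + 1) * ℓ T (yhat (T + 1 + 1)) := by
      rw [hδ]; simp; ring
    simp only [Nat.add_sub_cancel]
    linarith

/-- Generic weighted regret bound for Optimistic-FTL (Lemma 2):
the weighted regret of the Optimistic-FTL iterates `ỹ_t` is bounded by
`Σ_{t=1}^T (δ_t(ỹ_t) - δ_t(ŷ_{t+1}))`, where `δ_t(y) = α_t (ℓ_t(y) - ℓ_{t-1}(y))`
and `ŷ_{t+1}` is the FTL leader (so `min_y Σ α_t ℓ_t(y)` is attained at `ŷ_{T+1}`). -/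
theorem optimistic_ftl_generic_regret {m : ℕ}
    (T : ℕ)
    (ℓ : ℕ → EuclideanSpace ℝ (Fin m) → ℝ)
    (α : ℕ → ℝ) (hα : ∀ t ∈ Icc 1 T, 0 < α t)
    (δ : ℕ → EuclideanSpace ℝ (Fin m) → ℝ)
    (hδ : ∀ t y, δ t y = α t * (ℓ t y - ℓ (t - 1) y))
    (ytil yhat : ℕ → EuclideanSpace ℝ (Fin m))
    -- ỹ_t minimizes y ↦ α_t ℓ_{t-1}(y) + Σ_{s=1}^{t-1} α_s ℓ_s(y) over ℝ^m
    (hytil : ∀ t ∈ Icc 1 T, ∀ y,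
      α t * ℓ (t - 1) (ytil t) + ∑ s ∈ Icc 1 (t - 1), α s * ℓ s (ytil t)
        ≤ α t * ℓ (t - 1) y + ∑ s ∈ Icc 1 (t - 1), α s * ℓ s y)
    -- ŷ_{t+1} minimizes y ↦ Σ_{s=1}^{t} α_s ℓ_s(y) over ℝ^m
    (hyhat : ∀ t ∈ Icc 1 T, ∀ y,
      ∑ s ∈ Icc 1 t, α s * ℓ s (yhat (t + 1)) ≤ ∑ s ∈ Icc 1 t, α s * ℓ s y) :
    (∑ t ∈ Icc 1 T, α t * ℓ t (ytil t)) - (∑ t ∈ Icc 1 T, α t * ℓ t (yhat (T + 1)))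
      ≤ ∑ t ∈ Icc 1 T, (δ t (ytil t) - δ t (yhat (t + 1))) := by
  have key := optimistic_ftl_aux ℓ α δ hδ ytil yhat T hytil hyhat
  have e : ∑ t ∈ Icc 1 T, (α t * ℓ (t - 1) (ytil t) + δ t (yhat (t + 1)))
      = ∑ t ∈ Icc 1 T, (α t * ℓ t (ytil t) - δ t (ytil t) + δ t (yhat (t + 1))) :=
    Finset.sum_congr rfl fun t _ => by rw [hδ, hδ]; ring
  rw [e] at key
  have e2 : ∑ t ∈ Icc 1 T, (α t * ℓ t (ytil t) - δ t (ytil t) + δ t (yhat (t + 1)))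
      = (∑ t ∈ Icc 1 T, α t * ℓ t (ytil t)) - ∑ t ∈ Icc 1 T, (δ t (ytil t) - δ t (yhat (t + 1))) := by
    rw [← Finset.sum_sub_distrib]
    exact Finset.sum_congr rfl fun t _ => by ring
  rw [e2] at key
  linarith
end

section
/- Let f : ℝ^d → ℝ be convex and L-smooth with respect to a norm ‖·‖ on ℝ^d (with dual norm ‖·‖_*). Let x_0, x_1, …, x_T ∈ ℝ^d be an arbitrary sequence, let α_1, …, α_T > 0 with A_t = Σ_{s=1}^t α_s, and define x̄_t = (1/A_t) Σ_{s=1}^t α_s x_s and x̃_t = (1/A_t)(α_t x_{t−1} + Σ_{s=1}^{t−1} α_s x_s). Consider the Fenchel-game losses ℓ_t(y) = f*(y) − ⟨x_t, y⟩ for t ≥ 0, and the Optimistic-FTL iterates ỹ_t = ∇f(x̃_t). Then the weighted regret satisfies Σ_{t=1}^T α_t ℓ_t(ỹ_t) − inf_y Σ_{t=1}^T α_t ℓ_t(y) ≤ L Σ_{t=1}^T (α_t²/A_t) ‖x_{t−1} − x_t‖². -/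
open scoped RealInnerProductSpace
open Finset

/-- The dual norm of a norm `N` on ℝ^d: `‖y‖_* = sup {⟪x, y⟫ : N x ≤ 1}`. -/
noncomputable def dualNorm {d : ℕ} (N : EuclideanSpace ℝ (Fin d) → ℝ)
    (y : EuclideanSpace ℝ (Fin d)) : ℝ :=
  sSup ((fun x => ⟪x, y⟫) '' {x | N x ≤ 1})

section aux
variable {d : ℕ} (N : EuclideanSpace ℝ (Fin d) → ℝ)
  (hN_add : ∀ u v, N (u + v) ≤ N u + N v)
  (hN_smul : ∀ (a : ℝ) (u : EuclideanSpace ℝ (Fin d)), N (a • u) = |a| * N u)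
  (hN_zero : ∀ u, N u = 0 → u = 0)

include hN_smul in
lemma auxN0 : N 0 = 0 := by
  have := hN_smul 0 0
  simpa using this

include hN_add hN_smul in
lemma auxN_nonneg : ∀ u, 0 ≤ N u := by
  intro u
  have h1 : N (u + (-u)) ≤ N u + N (-u) := hN_add u (-u)
  have h2 : N (-u) = N u := by
    have := hN_smul (-1) u; simpa using this
  have h0 : N (0 : EuclideanSpace ℝ (Fin d)) = 0 := auxN0 N hN_smul
  rw [add_neg_cancel, h0, h2] at h1
  linarith

include hN_add hN_smul hN_zero in
lemma auxN_lower : ∃ c : ℝ, 0 < c ∧ ∀ u, c * ‖u‖ ≤ N u := by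
  classical
  have hnn := auxN_nonneg N hN_add hN_smul
  have h0 : N 0 = 0 := auxN0 N hN_smul
  -- upper bound: N u ≤ C * ‖u‖
  have hrep : ∀ w : EuclideanSpace ℝ (Fin d),
      w = ∑ i : Fin d, w i • EuclideanSpace.single i (1:ℝ) := by
    intro w
    ext j
    have : (∑ i : Fin d, w i • EuclideanSpace.single i (1:ℝ)) j
        = ∑ i : Fin d, (w i • EuclideanSpace.single i (1:ℝ)) j := by
      simp [Pi.single_apply]
    rw [this]
    simp [EuclideanSpace.single_apply]
  have hNsum : ∀ (s : Finset (Fin d)) (g : Fin d → EuclideanSpace ℝ (Fin d)),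
      N (∑ i ∈ s, g i) ≤ ∑ i ∈ s, N (g i) := by
    intro s g
    induction s using Finset.induction with
    | empty => simp [h0]
    | insert _ _ h ih =>
      rw [Finset.sum_insert h, Finset.sum_insert h]
      exact le_trans (hN_add _ _) (by linarith)
  set C : ℝ := ∑ i : Fin d, N (EuclideanSpace.single i (1:ℝ)) with hC
  have hCoord : ∀ (w : EuclideanSpace ℝ (Fin d)) (i : Fin d), |w i| ≤ ‖w‖ := by
    intro w i
    have h1 : ⟪EuclideanSpace.single i (1:ℝ), w⟫ = w i := by
      rw [EuclideanSpace.inner_single_left]; simp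
    have h2 := abs_real_inner_le_norm (EuclideanSpace.single i (1:ℝ)) w
    rw [h1, EuclideanSpace.norm_single] at h2
    simpa using h2
  have hupper : ∀ w, N w ≤ C * ‖w‖ := by
    intro w
    calc N w = N (∑ i : Fin d, w i • EuclideanSpace.single i (1:ℝ)) := by rw [← hrep]
    _ ≤ ∑ i : Fin d, N (w i • EuclideanSpace.single i (1:ℝ)) := hNsum _ _
    _ = ∑ i : Fin d, |w i| * N (EuclideanSpace.single i (1:ℝ)) := by
        simp_rw [hN_smul]
    _ ≤ ∑ i : Fin d, ‖w‖ * N (EuclideanSpace.single i (1:ℝ)) := by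
        apply Finset.sum_le_sum
        intro i _
        exact mul_le_mul_of_nonneg_right (hCoord w i) (hnn _)
    _ = C * ‖w‖ := by rw [hC, Finset.sum_mul]; exact Finset.sum_congr rfl (fun i _ => by ring)
  -- N is Lipschitz hence continuous
  have hcont : Continuous N := by
    have hlip : ∀ u v, |N u - N v| ≤ C * ‖u - v‖ := by
      intro u v
      have hneg : N (v - u) = N (u - v) := by
        have h := hN_smul (-1) (u - v)
        rw [neg_one_smul] at h
        rw [show v - u = -(u - v) by abel, h, abs_neg, abs_one, one_mul]
      have h1 : N u ≤ N v + N (u - v) := by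
        have := hN_add v (u - v); simpa using this
      have h2 : N v ≤ N u + N (u - v) := by
        have := hN_add u (v - u); rw [hneg] at this; simpa using this
      have := hupper (u - v)
      rw [abs_sub_le_iff]
      constructor <;> linarith
    rw [Metric.continuous_iff]
    intro b ε hε
    rcases le_or_gt C 0 with hCle | hCpos
    · refine ⟨1, one_pos, fun a _ => ?_⟩
      have h1 : |N a - N b| ≤ C * ‖a - b‖ := hlip a b
      have h2 : C * ‖a - b‖ ≤ 0 := mul_nonpos_of_nonpos_of_nonneg hCle (norm_nonneg _)
      have : |N a - N b| = 0 := le_antisymm (h1.trans h2) (abs_nonneg _)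
      rw [Real.dist_eq, this]; exact hε
    · refine ⟨ε / C, by positivity, fun a ha => ?_⟩
      rw [Real.dist_eq]
      calc |N a - N b| ≤ C * ‖a - b‖ := hlip a b
        _ < C * (ε / C) := by
            have hab : ‖a - b‖ < ε / C := by rw [← dist_eq_norm]; exact ha
            exact (mul_lt_mul_iff_right₀ hCpos).2 hab
        _ = ε := by field_simp
  by_cases hd : d = 0
  · refine ⟨1, one_pos, fun u => ?_⟩
    subst hd
    have : u = 0 := Subsingleton.elim u 0
    rw [this, norm_zero, mul_zero]; exact hnn 0
  -- sphere compact, N attains positive min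
  · have : Nontrivial (EuclideanSpace ℝ (Fin d)) := by
      have : 0 < d := Nat.pos_of_ne_zero hd
      exact ⟨EuclideanSpace.single ⟨0, this⟩ (1:ℝ), 0, by
        intro h
        have := congrArg (fun w => ‖w‖) h
        simp [EuclideanSpace.norm_single] at this⟩
    have hsne : (Metric.sphere (0 : EuclideanSpace ℝ (Fin d)) 1).Nonempty :=
      NormedSpace.sphere_nonempty.2 zero_le_one
    obtain ⟨x₀, hx₀mem, hx₀min⟩ :=
      (isCompact_sphere (0 : EuclideanSpace ℝ (Fin d)) 1).exists_isMinOn hsne hcont.continuousOn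
    have hx₀norm : ‖x₀‖ = 1 := by simpa using hx₀mem
    have hx₀ne : x₀ ≠ 0 := by intro h; rw [h, norm_zero] at hx₀norm; norm_num at hx₀norm
    have hcpos : 0 < N x₀ := by
      rcases lt_or_eq_of_le (hnn x₀) with h | h
      · exact h
      · exact absurd (hN_zero x₀ h.symm) hx₀ne
    refine ⟨N x₀, hcpos, fun u => ?_⟩
    rcases eq_or_ne u 0 with rfl | hu
    · simp [h0]
    · have hun : ‖u‖ ≠ 0 := norm_ne_zero_iff.2 hu
      have hmem : (‖u‖⁻¹ • u) ∈ Metric.sphere (0 : EuclideanSpace ℝ (Fin d)) 1 := by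
        simp [norm_smul, abs_of_nonneg (inv_nonneg.2 (norm_nonneg u)), inv_mul_cancel₀ hun]
      have := hx₀min hmem
      have hNu : N (‖u‖⁻¹ • u) = ‖u‖⁻¹ * N u := by
        rw [hN_smul]; congr 1; exact abs_of_nonneg (inv_nonneg.2 (norm_nonneg u))
      have hpos : (0:ℝ) < ‖u‖ := lt_of_le_of_ne (norm_nonneg u) (Ne.symm hun)
      have h1 : N x₀ ≤ ‖u‖⁻¹ * N u := by rw [← hNu]; exact this
      calc N x₀ * ‖u‖ ≤ (‖u‖⁻¹ * N u) * ‖u‖ := by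
            exact mul_le_mul_of_nonneg_right h1 (norm_nonneg u)
        _ = N u := by field_simp

include hN_add hN_smul hN_zero in
lemma aux_bdd (w : EuclideanSpace ℝ (Fin d)) :
    BddAbove ((fun x => ⟪x, w⟫) '' {x | N x ≤ 1}) := by
  obtain ⟨c, hc, hlow⟩ := auxN_lower N hN_add hN_smul hN_zero
  refine ⟨c⁻¹ * ‖w‖, fun r hr => ?_⟩
  obtain ⟨x, hx, rfl⟩ := hr
  have h1 : c * ‖x‖ ≤ 1 := le_trans (hlow x) hx
  have h2 : ‖x‖ ≤ c⁻¹ := by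
    rw [show c⁻¹ = 1 / c by ring, le_div_iff₀ hc]
    linarith [mul_comm c ‖x‖]
  calc ⟪x, w⟫ ≤ ‖x‖ * ‖w‖ := real_inner_le_norm x w
    _ ≤ c⁻¹ * ‖w‖ := mul_le_mul_of_nonneg_right h2 (norm_nonneg w)

include hN_add hN_smul hN_zero in
lemma aux_holder (u w : EuclideanSpace ℝ (Fin d)) :
    ⟪u, w⟫ ≤ N u * dualNorm N w := by
  have hnn := auxN_nonneg N hN_add hN_smul
  have hbdd := aux_bdd N hN_add hN_smul hN_zero w
  rcases eq_or_ne u 0 with rfl | hu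
  · rw [inner_zero_left, auxN0 N hN_smul, zero_mul]
  · have hNu : 0 < N u := by
      rcases lt_or_eq_of_le (hnn u) with h | h
      · exact h
      · exact absurd (hN_zero u h.symm) hu
    have hmem : ((N u)⁻¹ • u) ∈ {x | N x ≤ 1} := by
      simp only [Set.mem_setOf_eq, hN_smul, abs_of_nonneg (inv_nonneg.2 hNu.le)]
      rw [inv_mul_cancel₀ hNu.ne']
    have hle : ⟪(N u)⁻¹ • u, w⟫ ≤ dualNorm N w :=
      le_csSup hbdd ⟨_, hmem, rfl⟩
    rw [real_inner_smul_left] at hle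
    calc ⟪u, w⟫ = N u * ((N u)⁻¹ * ⟪u, w⟫) := by field_simp
      _ ≤ N u * dualNorm N w := mul_le_mul_of_nonneg_left hle hNu.le

end aux

section grad
variable {d : ℕ} (f : EuclideanSpace ℝ (Fin d) → ℝ)
  (hconv : ConvexOn ℝ Set.univ f) (hdiff : Differentiable ℝ f)

include hconv hdiff in
lemma aux_grad_ineq (z u : EuclideanSpace ℝ (Fin d)) :
    f z + ⟪gradient f z, u - z⟫ ≤ f u := by
  set g : ℝ → ℝ := fun t => f (z + t • (u - z)) with hg
  have hgconv : ConvexOn ℝ Set.univ g := by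
    have := hconv.comp_affineMap (AffineMap.lineMap z u : ℝ →ᵃ[ℝ] _)
    have heq : ∀ t : ℝ, (AffineMap.lineMap z u) t = z + t • (u - z) := by
      intro t; simp [AffineMap.lineMap_apply]; module
    have key : g = f ∘ AffineMap.lineMap z u := by funext t; simp [hg, heq]
    rw [key]; exact this.subset (Set.subset_univ _) (convex_univ)
  have hline : HasDerivAt (fun t : ℝ => z + t • (u - z)) (u - z) 0 := by
    have h1 : HasDerivAt (fun t : ℝ => t • (u - z)) (u - z) 0 := by
      simpa using (hasDerivAt_id (0:ℝ)).smul_const (u - z)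
    simpa using h1.const_add z
  have hfd : HasFDerivAt f (InnerProductSpace.toDualMap ℝ _ (gradient f z)) z := by
    have := (hdiff z).hasGradientAt
    rwa [hasGradientAt_iff_hasFDerivAt] at this
  have hgd : HasDerivAt g ⟪gradient f z, u - z⟫ 0 := by
    have hz0 : z + (0:ℝ) • (u - z) = z := by simp
    have hfd' : HasFDerivAt f (InnerProductSpace.toDualMap ℝ _ (gradient f z))
        (z + (0:ℝ) • (u - z)) := by
      rw [show z + (0:ℝ) • (u - z) = z by simp]; exact hfd
    have hc := hfd'.comp_hasDerivAt (0:ℝ)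
      hline
    exact hc
  have hs := hgconv.le_slope_of_hasDerivAt (Set.mem_univ (0:ℝ)) (Set.mem_univ 1)
    zero_lt_one hgd
  rw [slope_def_field] at hs
  have h0 : g 0 = f z := by simp [hg]
  have h1 : g 1 = f u := by simp [hg]
  rw [h0, h1] at hs
  have : ⟪gradient f z, u - z⟫ ≤ f u - f z := by
    calc ⟪gradient f z, u - z⟫ ≤ (f u - f z) / (1 - 0) := hs
      _ = f u - f z := by norm_num
  linarith

include hconv hdiff in
lemma aux_fenchel_min (fstar : EuclideanSpace ℝ (Fin d) → ℝ)
    (hfstar : ∀ y, IsLUB (Set.range fun x => ⟪x, y⟫ - f x) (fstar y))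
    (z y : EuclideanSpace ℝ (Fin d)) :
    fstar (gradient f z) - ⟪z, gradient f z⟫ ≤ fstar y - ⟪z, y⟫ := by
  have hub : ∀ w v, ⟪v, w⟫ - f v ≤ fstar w := fun w v => (hfstar w).1 ⟨v, rfl⟩
  have heq : fstar (gradient f z) = ⟪z, gradient f z⟫ - f z := by
    refine le_antisymm ?_ (hub _ z)
    refine (hfstar (gradient f z)).2 ?_
    rintro r ⟨v, rfl⟩
    have := aux_grad_ineq f hconv hdiff z v
    have hcomm : ⟪gradient f z, v - z⟫ = ⟪v, gradient f z⟫ - ⟪z, gradient f z⟫ := by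
      rw [real_inner_comm]
      rw [inner_sub_left]
    simp only
    linarith
  rw [heq]
  have := hub y z
  linarith

end grad


/-- Lemma 3: for a convex `L`-smooth function `f` (w.r.t. a norm `N` with dual
norm `‖·‖_*`), an arbitrary sequence `x_0, …, x_T` and positive weights `α_t`, the weighted
regret of the Optimistic-FTL iterates `ỹ_t = ∇f(x̃_t)` on the Fenchel-game losses
`ℓ_t(y) = f*(y) - ⟪x_t, y⟫` is at most `L Σ_t (α_t²/A_t) N(x_{t-1} - x_t)²`. -/
theorem optimistic_ftl_fenchel_regret {d : ℕ}
    (f fstar : EuclideanSpace ℝ (Fin d) → ℝ)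
    (N : EuclideanSpace ℝ (Fin d) → ℝ)
    (hconv : ConvexOn ℝ Set.univ f)
    (hdiff : Differentiable ℝ f)
    (hfstar : ∀ y, IsLUB (Set.range fun x => ⟪x, y⟫ - f x) (fstar y))
    -- N is a norm
    (hN_add : ∀ u v, N (u + v) ≤ N u + N v)
    (hN_smul : ∀ (a : ℝ) (u : EuclideanSpace ℝ (Fin d)), N (a • u) = |a| * N u)
    (hN_zero : ∀ u, N u = 0 → u = 0)
    -- f is L-smooth with respect to N
    (L : ℝ) (hL : 0 < L)
    (hsmooth : ∀ u v, dualNorm N (gradient f u - gradient f v) ≤ L * N (u - v))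
    (T : ℕ)
    (x : ℕ → EuclideanSpace ℝ (Fin d))
    (α : ℕ → ℝ) (hα : ∀ t ∈ Icc 1 T, 0 < α t)
    (A : ℕ → ℝ) (hA : ∀ t, A t = ∑ s ∈ Icc 1 t, α s)
    (xtil : ℕ → EuclideanSpace ℝ (Fin d))
    (hxtil : ∀ t ∈ Icc 1 T,
      xtil t = (A t)⁻¹ • (α t • x (t - 1) + ∑ s ∈ Icc 1 (t - 1), α s • x s))
    (ytil : ℕ → EuclideanSpace ℝ (Fin d))
    (hytil : ∀ t ∈ Icc 1 T, ytil t = gradient f (xtil t)) :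
    ∀ y, (∑ t ∈ Icc 1 T, α t * (fstar (ytil t) - ⟪x t, ytil t⟫))
        - (∑ t ∈ Icc 1 T, α t * (fstar y - ⟪x t, y⟫))
      ≤ L * ∑ t ∈ Icc 1 T, (α t ^ 2 / A t) * (N (x (t - 1) - x t)) ^ 2 := by
  intro y
  classical
  have hnn := auxN_nonneg N hN_add hN_smul
  have hmin := aux_fenchel_min f hconv hdiff fstar hfstar
  set w : ℕ → EuclideanSpace ℝ (Fin d) := fun t => ∑ s ∈ Icc 1 t, α s • x s with hw
  set S : ℕ → EuclideanSpace ℝ (Fin d) → ℝ :=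
    fun t y' => ∑ s ∈ Icc 1 t, α s * (fstar y' - ⟪x s, y'⟫) with hS
  set xb : ℕ → EuclideanSpace ℝ (Fin d) := fun t => (A t)⁻¹ • w t with hxb
  set yh : ℕ → EuclideanSpace ℝ (Fin d) := fun t => gradient f (xb t) with hyh
  have hApos : ∀ t, 1 ≤ t → t ≤ T → 0 < A t := by
    intro t h1 h2
    rw [hA]
    apply Finset.sum_pos
    · intro s hs
      rw [mem_Icc] at hs
      exact hα s (mem_Icc.2 ⟨hs.1, le_trans hs.2 h2⟩)
    · exact ⟨t, mem_Icc.2 ⟨h1, le_refl t⟩⟩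
  have hAsucc : ∀ n, A (n + 1) = A n + α (n + 1) := by
    intro n
    rw [hA, hA, Finset.sum_Icc_succ_top (Nat.le_add_left 1 n)]
  have hSlin : ∀ t y', S t y' = A t * fstar y' - ⟪w t, y'⟫ := by
    intro t y'
    have h1 : ⟪w t, y'⟫ = ∑ s ∈ Icc 1 t, α s * ⟪x s, y'⟫ := by
      rw [hw]
      rw [sum_inner]
      exact Finset.sum_congr rfl fun s _ => real_inner_smul_left _ _ _
    rw [hS, hA, h1, Finset.sum_mul, ← Finset.sum_sub_distrib]
    exact Finset.sum_congr rfl fun s _ => by ring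
  have hwA : ∀ t, 1 ≤ t → t ≤ T → w t = A t • xb t := by
    intro t h1 h2
    rw [hxb]
    rw [smul_smul, mul_inv_cancel₀ (hApos t h1 h2).ne', one_smul]
  have hSxb : ∀ t, 1 ≤ t → t ≤ T → ∀ y', S t y' = A t * (fstar y' - ⟪xb t, y'⟫) := by
    intro t h1 h2 y'
    rw [hSlin, hwA t h1 h2, real_inner_smul_left]
    ring
  have hSmin : ∀ t, 1 ≤ t → t ≤ T → ∀ y', S t (yh t) ≤ S t y' := by
    intro t h1 h2 y'
    rw [hSxb t h1 h2, hSxb t h1 h2]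
    exact mul_le_mul_of_nonneg_left (hmin (xb t) y') (hApos t h1 h2).le
  have hH : ∀ n, n + 1 ≤ T → ∀ y',
      S n y' + α (n + 1) * (fstar y' - ⟪x n, y'⟫)
        = A (n + 1) * (fstar y' - ⟪xtil (n + 1), y'⟫) := by
    intro n hn y'
    have hmem : (n + 1) ∈ Icc 1 T := mem_Icc.2 ⟨Nat.le_add_left 1 n, hn⟩
    have hApos' := hApos (n + 1) (Nat.le_add_left 1 n) hn
    have hx1 := hxtil (n + 1) hmem
    simp only [Nat.add_sub_cancel] at hx1
    have hxtil' : A (n + 1) • xtil (n + 1) = α (n + 1) • x n + w n := by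
      rw [hx1, smul_smul, mul_inv_cancel₀ hApos'.ne', one_smul]
    have h2 : A (n + 1) * (fstar y' - ⟪xtil (n + 1), y'⟫)
        = A (n + 1) * fstar y' - ⟪A (n + 1) • xtil (n + 1), y'⟫ := by
      rw [real_inner_smul_left]; ring
    rw [hSlin, h2, hxtil', hAsucc n, inner_add_left, real_inner_smul_left]
    ring
  -- Be-the-leader style induction
  have hBTL : ∀ n, n ≤ T → ∀ y',
      (∑ t ∈ Icc 1 n, (α t * (fstar (ytil t) - ⟪x (t - 1), ytil t⟫)
        + α t * (fstar (yh t) - ⟪x t, yh t⟫)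
        - α t * (fstar (yh t) - ⟪x (t - 1), yh t⟫))) ≤ S n y' := by
    intro n
    induction n with
    | zero => intro _ y'; simp [hS]
    | succ n ih =>
      intro hn y'
      have hn' : n ≤ T := le_trans (Nat.le_succ n) hn
      have hmem : (n + 1) ∈ Icc 1 T := mem_Icc.2 ⟨Nat.le_add_left 1 n, hn⟩
      rw [Finset.sum_Icc_succ_top (Nat.le_add_left 1 n)]
      simp only [Nat.add_sub_cancel]
      have h1 := ih hn' (ytil (n + 1))
      have hyt := hytil (n + 1) hmem
      have htilmin : A (n + 1) * (fstar (ytil (n + 1)) - ⟪xtil (n + 1), ytil (n + 1)⟫)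
          ≤ A (n + 1) * (fstar (yh (n + 1)) - ⟪xtil (n + 1), yh (n + 1)⟫) := by
        apply mul_le_mul_of_nonneg_left _ (hApos (n + 1) (Nat.le_add_left 1 n) hn).le
        rw [hyt]
        exact hmin (xtil (n + 1)) (yh (n + 1))
      have hH1 := hH n hn (ytil (n + 1))
      have hH2 := hH n hn (yh (n + 1))
      have hs2 : S (n + 1) (yh (n + 1)) ≤ S (n + 1) y' :=
        hSmin (n + 1) (Nat.le_add_left 1 n) hn y'
      have hSexp : S (n + 1) (yh (n + 1))
          = S n (yh (n + 1)) + α (n + 1) * (fstar (yh (n + 1)) - ⟪x (n + 1), yh (n + 1)⟫) := by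
        rw [hS]
        exact Finset.sum_Icc_succ_top (Nat.le_add_left 1 n) _
      linarith
  -- assemble
  have hgoal2 : (∑ t ∈ Icc 1 T, α t * (fstar y - ⟪x t, y⟫)) = S T y := by rw [hS]
  rw [hgoal2]
  have hstep1 : (∑ t ∈ Icc 1 T, α t * (fstar (ytil t) - ⟪x t, ytil t⟫)) - S T y
      ≤ ∑ t ∈ Icc 1 T, (α t * (fstar (ytil t) - ⟪x t, ytil t⟫)
        - (α t * (fstar (ytil t) - ⟪x (t - 1), ytil t⟫)
          + α t * (fstar (yh t) - ⟪x t, yh t⟫)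
          - α t * (fstar (yh t) - ⟪x (t - 1), yh t⟫))) := by
    rw [Finset.sum_sub_distrib]
    have := hBTL T le_rfl y
    linarith
  refine le_trans hstep1 ?_
  rw [Finset.mul_sum]
  apply Finset.sum_le_sum
  intro t ht
  rw [mem_Icc] at ht
  obtain ⟨ht1, ht2⟩ := ht
  have htmem : t ∈ Icc 1 T := mem_Icc.2 ⟨ht1, ht2⟩
  -- rewrite LHS as inner product
  have hexp : α t * (fstar (ytil t) - ⟪x t, ytil t⟫)
      - (α t * (fstar (ytil t) - ⟪x (t - 1), ytil t⟫)
        + α t * (fstar (yh t) - ⟪x t, yh t⟫)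
        - α t * (fstar (yh t) - ⟪x (t - 1), yh t⟫))
      = α t * ⟪x (t - 1) - x t, ytil t - yh t⟫ := by
    rw [inner_sub_left, inner_sub_right, inner_sub_right]
    ring
  rw [hexp]
  -- bound
  obtain ⟨n, rfl⟩ : ∃ n, t = n + 1 := ⟨t - 1, (Nat.succ_pred_eq_of_pos ht1).symm⟩
  simp only [Nat.add_sub_cancel]
  have hApos' := hApos (n + 1) (Nat.le_add_left 1 n) ht2
  have hx1 := hxtil (n + 1) (mem_Icc.2 ⟨Nat.le_add_left 1 n, ht2⟩)
  simp only [Nat.add_sub_cancel] at hx1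
  have hwsucc : w (n + 1) = w n + α (n + 1) • x (n + 1) := by
    rw [hw]
    exact Finset.sum_Icc_succ_top (Nat.le_add_left 1 n) _
  have hdiffeq : xtil (n + 1) - xb (n + 1)
      = ((A (n + 1))⁻¹ * α (n + 1)) • (x n - x (n + 1)) := by
    rw [hx1]
    simp only [hxb]
    rw [hwsucc]
    module
  have hαpos := hα (n + 1) (mem_Icc.2 ⟨Nat.le_add_left 1 n, ht2⟩)
  have hNdiff : N (xtil (n + 1) - xb (n + 1))
      = (A (n + 1))⁻¹ * α (n + 1) * N (x n - x (n + 1)) := by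
    rw [hdiffeq, hN_smul]
    congr 1
    exact abs_of_nonneg (mul_nonneg (inv_nonneg.2 hApos'.le) hαpos.le)
  have hgrad : ytil (n + 1) - yh (n + 1) = gradient f (xtil (n + 1)) - gradient f (xb (n + 1)) := by
    rw [hytil (n + 1) (mem_Icc.2 ⟨Nat.le_add_left 1 n, ht2⟩), hyh]
  have hdn : dualNorm N (ytil (n + 1) - yh (n + 1)) ≤ L * N (xtil (n + 1) - xb (n + 1)) := by
    rw [hgrad]
    exact hsmooth _ _
  have s1 : ⟪x n - x (n + 1), ytil (n + 1) - yh (n + 1)⟫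
      ≤ N (x n - x (n + 1)) * dualNorm N (ytil (n + 1) - yh (n + 1)) :=
    aux_holder N hN_add hN_smul hN_zero _ _
  have s2 : N (x n - x (n + 1)) * dualNorm N (ytil (n + 1) - yh (n + 1))
      ≤ N (x n - x (n + 1)) * (L * ((A (n + 1))⁻¹ * α (n + 1) * N (x n - x (n + 1)))) := by
    apply mul_le_mul_of_nonneg_left _ (hnn _)
    rw [← hNdiff]
    exact hdn
  have s3 : α (n + 1) * ⟪x n - x (n + 1), ytil (n + 1) - yh (n + 1)⟫
      ≤ α (n + 1) * (N (x n - x (n + 1)) * (L * ((A (n + 1))⁻¹ * α (n + 1) * N (x n - x (n + 1))))) :=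
    mul_le_mul_of_nonneg_left (le_trans s1 s2) hαpos.le
  refine le_trans s3 (le_of_eq ?_)
  rw [div_eq_mul_inv]
  ring
end

section
/- Let 𝒦 ⊆ ℝ^d be convex, let φ : ℝ^d → ℝ be differentiable and 1-strongly convex with respect to a norm ‖·‖, with Bregman divergence V_c(x) = φ(x) − ⟨∇φ(c), x − c⟩ − φ(c). Let α_t > 0, let γ_1 ≥ γ_2 ≥ … ≥ γ_T > 0 be non-increasing, let y_1, …, y_T ∈ ℝ^d be arbitrary, and let the Mirror-Descent iterates be x_t = argmin_{x ∈ 𝒦} [γ_t ⟨x, α_t y_t⟩ + V_{x_{t−1}}(x)] from some x_0 ∈ 𝒦. Fix x* ∈ 𝒦 and suppose V_{x_t}(x*) ≤ D for all t = 0, …, T. Then Σ_{t=1}^T α_t ⟨x_t − x*, y_t⟩ ≤ D/γ_T − Σ_{t=1}^T (1/(2γ_t)) ‖x_{t−1} − x_t‖². -/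
open scoped RealInnerProductSpace
open Finset Topology Filter

lemma md_first_order {d : ℕ} {K : Set (EuclideanSpace ℝ (Fin d))} (hK : Convex ℝ K)
    {φ : EuclideanSpace ℝ (Fin d) → ℝ} (hφ : Differentiable ℝ φ)
    {β : ℝ} {y c z w : EuclideanSpace ℝ (Fin d)} (hz : z ∈ K) (hw : w ∈ K)
    (hmin : ∀ u ∈ K, β * ⟪z, y⟫ + (φ z - ⟪gradient φ c, z - c⟫ - φ c)
        ≤ β * ⟪u, y⟫ + (φ u - ⟪gradient φ c, u - c⟫ - φ c)) :
    0 ≤ β * ⟪w - z, y⟫ + ⟪gradient φ z - gradient φ c, w - z⟫ := by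
  set v := w - z with hv
  set C : ℝ := ⟪gradient φ c, v⟫ - β * ⟪v, y⟫ with hC
  set ψ : ℝ → ℝ := fun lam => φ (z + lam • v) with hψdef
  -- derivative of ψ at 0
  have hL : HasDerivAt (fun lam : ℝ => z + lam • v) v 0 := by
    have := ((hasDerivAt_id (0:ℝ)).smul_const v).const_add z
    simpa using this
  have hgrad : HasGradientAt φ (gradient φ z) z := (hφ z).hasGradientAt
  have hfd : HasFDerivAt φ (InnerProductSpace.toDual ℝ _ (gradient φ z)) z :=
    hgrad.hasFDerivAt
  have hψ : HasDerivAt ψ ⟪gradient φ z, v⟫ 0 := by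
    have h0 : z + (0:ℝ) • v = z := by simp
    rw [← h0] at hfd
    have := hfd.comp_hasDerivAt (0:ℝ) hL
    simpa [InnerProductSpace.toDual_apply_apply, hψdef, Function.comp_def] using this
  have hslope : Filter.Tendsto (slope ψ 0) (𝓝[>] (0:ℝ)) (𝓝 ⟪gradient φ z, v⟫) :=
    (hasDerivAt_iff_tendsto_slope.mp hψ).mono_left
      (nhdsWithin_mono _ (fun a ha => ne_of_gt ha))
  have hev : ∀ᶠ lam in 𝓝[>] (0:ℝ), C ≤ slope ψ 0 lam := by
    filter_upwards [Ioc_mem_nhdsGT (zero_lt_one)] with lam hlam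
    obtain ⟨hl0, hl1⟩ := hlam
    have hmem : z + lam • v ∈ K := by
      have h2 := hK hz hw (by linarith : (0:ℝ) ≤ 1 - lam) hl0.le (by ring)
      have : z + lam • v = (1 - lam) • z + lam • w := by rw [hv]; module
      rw [this]; exact h2
    have hmin' := hmin _ hmem
    have e1 : ⟪gradient φ c, z + lam • v - c⟫
        = ⟪gradient φ c, z - c⟫ + lam * ⟪gradient φ c, v⟫ := by
      rw [show z + lam • v - c = (z - c) + lam • v from by abel]
      rw [inner_add_right, real_inner_smul_right]
    have e2 : ⟪z + lam • v, y⟫ = ⟪z, y⟫ + lam * ⟪v, y⟫ := by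
      rw [inner_add_left, real_inner_smul_left]
    have hkey : lam * C ≤ ψ lam - ψ 0 := by
      have hψ0 : ψ 0 = φ z := by simp [hψdef]
      have hψl : ψ lam = φ (z + lam • v) := rfl
      rw [hψ0, hψl, hC]
      rw [e1, e2] at hmin'
      ring_nf at hmin' ⊢
      linarith [hmin']
    have : slope ψ 0 lam = (ψ lam - ψ 0) / lam := by
      rw [slope_def_field]; ring_nf
    rw [this, le_div_iff₀ hl0]
    linarith [hkey]
  have hCle : C ≤ ⟪gradient φ z, v⟫ := ge_of_tendsto hslope hev
  have : ⟪gradient φ z - gradient φ c, v⟫ = ⟪gradient φ z, v⟫ - ⟪gradient φ c, v⟫ :=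
    inner_sub_left _ _ _
  linarith [hCle, this]

/-- Lemma 4: weighted regret of Mirror Descent with non-increasing learning
rates `γ_t`, a 1-strongly convex (w.r.t. a norm `N`) distance generating function `φ` with
Bregman divergence `V`, and a uniform bound `V_{x_t}(x*) ≤ D`. -/
theorem mirror_descent_weighted_regret {d : ℕ}
    (K : Set (EuclideanSpace ℝ (Fin d))) (hK : Convex ℝ K)
    (N : EuclideanSpace ℝ (Fin d) → ℝ)
    -- N is a norm
    (hN_add : ∀ u v, N (u + v) ≤ N u + N v)
    (hN_smul : ∀ (a : ℝ) (u : EuclideanSpace ℝ (Fin d)), N (a • u) = |a| * N u)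
    (hN_zero : ∀ u, N u = 0 → u = 0)
    -- φ is differentiable with Bregman divergence V, and 1-strongly convex w.r.t. N
    (φ : EuclideanSpace ℝ (Fin d) → ℝ) (hφ : Differentiable ℝ φ)
    (V : EuclideanSpace ℝ (Fin d) → EuclideanSpace ℝ (Fin d) → ℝ)
    (hV : ∀ c x, V c x = φ x - ⟪gradient φ c, x - c⟫ - φ c)
    (hφsc : ∀ c x, (1 / 2) * (N (x - c)) ^ 2 ≤ V c x)
    (T : ℕ) (hT : 1 ≤ T)
    (α : ℕ → ℝ) (hα : ∀ t ∈ Icc 1 T, 0 < α t)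
    (γ : ℕ → ℝ) (hγpos : ∀ t ∈ Icc 1 T, 0 < γ t)
    (hγmono : ∀ s ∈ Icc 1 T, ∀ t ∈ Icc 1 T, s ≤ t → γ t ≤ γ s)
    (y : ℕ → EuclideanSpace ℝ (Fin d))
    -- the Mirror Descent iterates
    (x : ℕ → EuclideanSpace ℝ (Fin d)) (hx0 : x 0 ∈ K)
    (hx : ∀ t ∈ Icc 1 T, x t ∈ K ∧ ∀ w ∈ K,
      γ t * (α t * ⟪x t, y t⟫) + V (x (t - 1)) (x t)
        ≤ γ t * (α t * ⟪w, y t⟫) + V (x (t - 1)) w)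
    (xstar : EuclideanSpace ℝ (Fin d)) (hxstar : xstar ∈ K)
    (D : ℝ) (hD : ∀ t ≤ T, V (x t) xstar ≤ D) :
    ∑ t ∈ Icc 1 T, α t * ⟪x t - xstar, y t⟫
      ≤ D / γ T - ∑ t ∈ Icc 1 T, (1 / (2 * γ t)) * (N (x (t - 1) - x t)) ^ 2 := by
  have hγpos' : ∀ t, 1 ≤ t → t ≤ T → 0 < γ t := fun t h1 h2 =>
    hγpos t (Finset.mem_Icc.mpr ⟨h1, h2⟩)
  have hVnonneg : ∀ c u, 0 ≤ V c u := fun c u =>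
    le_trans (by positivity) (hφsc c u)
  have hNsym : ∀ u v, N (u - v) = N (v - u) := by
    intro u v
    have h := hN_smul (-1) (v - u)
    rw [show (-1 : ℝ) • (v - u) = u - v from by module] at h
    simpa using h
  -- per-step key inequality
  have key : ∀ t, 1 ≤ t → t ≤ T →
      α t * ⟪x t - xstar, y t⟫ + (1 / (2 * γ t)) * (N (x (t - 1) - x t)) ^ 2
        ≤ (V (x (t - 1)) xstar - V (x t) xstar) / γ t := by
    intro t h1 h2
    have hγt := hγpos' t h1 h2
    obtain ⟨hmemK, hmin⟩ := hx t (Finset.mem_Icc.mpr ⟨h1, h2⟩)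
    have hmin' : ∀ u ∈ K, (γ t * α t) * ⟪x t, y t⟫
          + (φ (x t) - ⟪gradient φ (x (t - 1)), x t - x (t - 1)⟫ - φ (x (t - 1)))
        ≤ (γ t * α t) * ⟪u, y t⟫
          + (φ u - ⟪gradient φ (x (t - 1)), u - x (t - 1)⟫ - φ (x (t - 1))) := by
      intro u hu
      have h := hmin u hu
      rw [hV, hV] at h
      simp only [mul_assoc]
      exact h
    have hfo := md_first_order hK hφ hmemK hxstar hmin'
    have h3 : ⟪gradient φ (x t) - gradient φ (x (t - 1)), xstar - x t⟫
        = V (x (t - 1)) xstar - V (x t) xstar - V (x (t - 1)) (x t) := by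
      rw [hV, hV, hV]
      simp only [inner_sub_left, inner_sub_right]
      ring
    have hstep : α t * ⟪x t - xstar, y t⟫
        ≤ (V (x (t - 1)) xstar - V (x t) xstar - V (x (t - 1)) (x t)) / γ t := by
      rw [le_div_iff₀ hγt]
      have hneg : ⟪x t - xstar, y t⟫ = -⟪xstar - x t, y t⟫ := by
        rw [show x t - xstar = -(xstar - x t) from by abel, inner_neg_left]
      rw [hneg, ← h3]
      ring_nf
      ring_nf at hfo
      linarith [hfo]
    have hsc : (1 / (2 * γ t)) * (N (x (t - 1) - x t)) ^ 2
        ≤ V (x (t - 1)) (x t) / γ t := by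
      have h1' := hφsc (x (t - 1)) (x t)
      have hrw : (1 / (2 * γ t)) * (N (x (t - 1) - x t)) ^ 2
          = ((1 / 2) * (N (x t - x (t - 1))) ^ 2) / γ t := by
        rw [hNsym]; field_simp
      rw [hrw]
      gcongr
    have hsum : (V (x (t - 1)) xstar - V (x t) xstar - V (x (t - 1)) (x t)) / γ t
        + V (x (t - 1)) (x t) / γ t
        = (V (x (t - 1)) xstar - V (x t) xstar) / γ t := by
      rw [← add_div, sub_add_cancel]
    linarith [hstep, hsc]
  -- induction
  have main : ∀ n, 1 ≤ n → n ≤ T →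
      ∑ t ∈ Icc 1 n, (α t * ⟪x t - xstar, y t⟫
          + (1 / (2 * γ t)) * (N (x (t - 1) - x t)) ^ 2)
        ≤ (D - V (x n) xstar) / γ n := by
    intro n
    induction n with
    | zero => intro h; exact absurd h (by norm_num)
    | succ n ih =>
      intro _ hnT
      rcases Nat.eq_zero_or_pos n with hn0 | hn1
      · subst hn0
        rw [show Icc 1 1 = {1} from rfl, Finset.sum_singleton]
        have hk := key 1 le_rfl hnT
        have hD0 : V (x 0) xstar ≤ D := hD 0 (by omega)
        calc α 1 * ⟪x 1 - xstar, y 1⟫ + (1 / (2 * γ 1)) * (N (x (1 - 1) - x 1)) ^ 2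
            ≤ (V (x 0) xstar - V (x 1) xstar) / γ 1 := hk
          _ ≤ (D - V (x 1) xstar) / γ 1 := by
              gcongr
              exact (hγpos' 1 le_rfl hnT).le
      · have hnT' : n ≤ T := by omega
        have ihn := ih hn1 hnT'
        have hk := key (n + 1) (by omega) hnT
        have hsplit : ∑ t ∈ Icc 1 (n + 1), (α t * ⟪x t - xstar, y t⟫
              + (1 / (2 * γ t)) * (N (x (t - 1) - x t)) ^ 2)
            = (∑ t ∈ Icc 1 n, (α t * ⟪x t - xstar, y t⟫
              + (1 / (2 * γ t)) * (N (x (t - 1) - x t)) ^ 2))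
              + (α (n+1) * ⟪x (n+1) - xstar, y (n+1)⟫
              + (1 / (2 * γ (n+1))) * (N (x (n + 1 - 1) - x (n+1))) ^ 2) := by
          rw [Finset.sum_Icc_succ_top (by omega : 1 ≤ n + 1)]
        have hγn := hγpos' n hn1 hnT'
        have hγn1 := hγpos' (n+1) (by omega) hnT
        have hγle : γ (n+1) ≤ γ n := hγmono n (Finset.mem_Icc.mpr ⟨hn1, hnT'⟩)
          (n+1) (Finset.mem_Icc.mpr ⟨by omega, hnT⟩) (by omega)
        have hDn : V (x n) xstar ≤ D := hD n hnT'
        have hmono : (D - V (x n) xstar) / γ n ≤ (D - V (x n) xstar) / γ (n+1) := by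
          gcongr
        rw [hsplit]
        have hfin : (D - V (x n) xstar) / γ (n+1)
            + (V (x n) xstar - V (x (n+1)) xstar) / γ (n+1)
            = (D - V (x (n+1)) xstar) / γ (n+1) := by
          rw [← add_div]; ring_nf
        have hk' : α (n+1) * ⟪x (n+1) - xstar, y (n+1)⟫
            + (1 / (2 * γ (n+1))) * (N (x (n + 1 - 1) - x (n+1))) ^ 2
            ≤ (V (x n) xstar - V (x (n+1)) xstar) / γ (n+1) := by
          simpa using hk
        linarith [ihn, hmono, hk', hfin]
  have hmainT := main T hT le_rfl
  rw [Finset.sum_add_distrib] at hmainT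
  have hlast : (D - V (x T) xstar) / γ T ≤ D / γ T := by
    gcongr
    · exact (hγpos' T hT le_rfl).le
    · linarith [hVnonneg (x T) xstar]
  linarith [hmainT, hlast]
end

section
/- Let f : ℝ^n → ℝ be convex lower semicontinuous and L-smooth with respect to the Euclidean norm, minimized at a point x* of finite norm. Set α_t = t, A_t = t(t+1)/2, and let 1/(C L) ≤ γ_t ≤ 1/(4L) be non-increasing with C > 4. From x_0 ∈ ℝ^n, iterate x_t = x_{t−1} − γ_t α_t ∇f(x̃_t), where x̃_t = (1/A_t)(α_t x_{t−1} + Σ_{s=1}^{t−1} α_s x_s). Suppose (1/2)‖x_t − x*‖² ≤ D for all t = 0, …, T. Then x̄_T = (1/A_T) Σ_{t=1}^T α_t x_t satisfies f(x̄_T) − f(x*) ≤ 2 C L D / T². -/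
open scoped RealInnerProductSpace
open Finset Filter

variable {E : Type*} [NormedAddCommGroup E] [InnerProductSpace ℝ E] [CompleteSpace E]

lemma grad_inner' (f : E → ℝ) (hdiff : Differentiable ℝ f) (p v : E) :
    ⟪gradient f p, v⟫ = fderiv ℝ f p v := by
  have : InnerProductSpace.toDual ℝ E (gradient f p) = fderiv ℝ f p := by
    simp [gradient]
  rw [← this, InnerProductSpace.toDual_apply_apply]

lemma hasDerivAt_line (f : E → ℝ) (hdiff : Differentiable ℝ f) (p v : E) (θ : ℝ) :
    HasDerivAt (fun θ : ℝ => f (p + θ • v)) ⟪gradient f (p + θ • v), v⟫ θ := by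
  have hc : HasDerivAt (fun θ : ℝ => p + θ • v) v θ := by
    simpa using ((hasDerivAt_id θ).smul_const v).const_add p
  have hf := (hdiff (p + θ • v)).hasFDerivAt
  have := hf.comp_hasDerivAt θ hc
  rw [grad_inner' f hdiff]
  exact this

/-- Gradient inequality for convex differentiable functions. -/
lemma convex_grad_ineq (f : E → ℝ) (hconv : ConvexOn ℝ Set.univ f)
    (hdiff : Differentiable ℝ f) (p q : E) :
    f p + ⟪gradient f p, q - p⟫ ≤ f q := by
  set v := q - p with hv
  have hg : HasDerivAt (fun θ : ℝ => f (p + θ • v)) ⟪gradient f (p + (0:ℝ) • v), v⟫ 0 :=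
    hasDerivAt_line f hdiff p v 0
  simp only [zero_smul, add_zero] at hg
  have hslope : Tendsto (fun θ : ℝ => (f (p + θ • v) - f p) / θ) (nhdsWithin 0 (Set.Ioi 0))
      (nhds ⟪gradient f p, v⟫) := by
    have := hasDerivAt_iff_tendsto_slope.mp hg
    have h2 := this.mono_left (nhdsWithin_mono 0 (by intro x hx; exact ne_of_gt hx))
    refine h2.congr (fun θ => ?_)
    simp [slope_def_field, div_eq_inv_mul]
  have hbound : ∀ᶠ θ in nhdsWithin (0:ℝ) (Set.Ioi 0),
      (f (p + θ • v) - f p) / θ ≤ f q - f p := by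
    filter_upwards [Ioc_mem_nhdsGT_of_mem (Set.left_mem_Ico.mpr one_pos)] with θ hθ
    obtain ⟨hθ0, hθ1⟩ := hθ
    have hcomb : f (p + θ • v) ≤ (1 - θ) * f p + θ * f q := by
      have := hconv.2 (Set.mem_univ p) (Set.mem_univ q) (by linarith : (0:ℝ) ≤ 1 - θ)
        (le_of_lt hθ0) (by ring)
      have heq : (1 - θ) • p + θ • q = p + θ • v := by rw [hv]; module
      rw [heq] at this
      simpa using this
    rw [div_le_iff₀ hθ0]
    nlinarith
  have := le_of_tendsto hslope hbound
  linarith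

open intervalIntegral in
/-- Descent lemma for functions with L-Lipschitz gradient. -/
lemma descent_lemma (f : E → ℝ) (hdiff : Differentiable ℝ f) (L : ℝ) (hL : 0 ≤ L)
    (hsmooth : ∀ u v, ‖gradient f u - gradient f v‖ ≤ L * ‖u - v‖) (p q : E) :
    f q ≤ f p + ⟪gradient f p, q - p⟫ + L / 2 * ‖q - p‖ ^ 2 := by
  set v := q - p with hv
  have hgradlip : LipschitzWith (Real.toNNReal L) (gradient f) := by
    apply LipschitzWith.of_dist_le_mul
    intro a b
    rw [dist_eq_norm, dist_eq_norm, Real.coe_toNNReal L hL]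
    exact hsmooth a b
  have hGcont : Continuous (fun θ : ℝ => ⟪gradient f (p + θ • v), v⟫) := by
    apply Continuous.inner
    · exact hgradlip.continuous.comp (continuous_const.add (continuous_id.smul continuous_const))
    · exact continuous_const
  have hftc := integral_eq_sub_of_hasDerivAt (a := (0:ℝ)) (b := 1)
    (fun θ _ => hasDerivAt_line f hdiff p v θ) (hGcont.intervalIntegrable 0 1)
  have hval : f q - f p = ∫ θ in (0:ℝ)..1, ⟪gradient f (p + θ • v), v⟫ := by
    rw [hftc]; congr 1 <;> simp [hv]
  have hmono : ∫ θ in (0:ℝ)..1, ⟪gradient f (p + θ • v), v⟫ ≤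
      ∫ θ in (0:ℝ)..1, (⟪gradient f p, v⟫ + L * θ * ‖v‖ ^ 2) := by
    apply integral_mono_on zero_le_one (hGcont.intervalIntegrable 0 1)
    · exact ((by continuity : Continuous fun θ : ℝ => ⟪gradient f p, v⟫ + L * θ * ‖v‖ ^ 2).intervalIntegrable 0 1)
    · intro θ hθ
      have h1 : ⟪gradient f (p + θ • v), v⟫ - ⟪gradient f p, v⟫
          = ⟪gradient f (p + θ • v) - gradient f p, v⟫ := by
        rw [inner_sub_left]
      have h2 : ⟪gradient f (p + θ • v) - gradient f p, v⟫ ≤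
          ‖gradient f (p + θ • v) - gradient f p‖ * ‖v‖ := real_inner_le_norm _ _
      have h3 : ‖gradient f (p + θ • v) - gradient f p‖ ≤ L * (θ * ‖v‖) := by
        have := hsmooth (p + θ • v) p
        simpa [norm_smul, abs_of_nonneg hθ.1] using this
      have h4 : ‖gradient f (p + θ • v) - gradient f p‖ * ‖v‖ ≤ L * (θ * ‖v‖) * ‖v‖ :=
        mul_le_mul_of_nonneg_right h3 (norm_nonneg _)
      nlinarith [norm_nonneg v]
  have hi2 : IntervalIntegrable (fun θ : ℝ => L * θ * ‖v‖ ^ 2) MeasureTheory.volume 0 1 :=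
    (by continuity : Continuous fun θ : ℝ => L * θ * ‖v‖ ^ 2).intervalIntegrable 0 1
  have hint : ∫ θ in (0:ℝ)..1, (⟪gradient f p, v⟫ + L * θ * ‖v‖ ^ 2)
      = ⟪gradient f p, v⟫ + L / 2 * ‖v‖ ^ 2 := by
    rw [integral_add ((continuous_const).intervalIntegrable 0 1) hi2]
    have h2 : ∫ θ in (0:ℝ)..1, L * θ * ‖v‖ ^ 2 = L / 2 * ‖v‖ ^ 2 := by
      have he : (fun θ : ℝ => L * θ * ‖v‖ ^ 2) = fun θ : ℝ => (L * ‖v‖ ^ 2) * θ := by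
        ext θ; ring
      rw [he, integral_const_mul, integral_id]
      ring
    rw [h2]
    simp
  have := hval ▸ (hmono.trans_eq hint)
  linarith

set_option maxHeartbeats 4000000 in
/-- Theorem 4 / Nesterov 1983 as a game: the unconstrained Euclidean iteration
`x_t = x_{t-1} - γ_t α_t ∇f(x̃_t)` with `α_t = t` and `1/(CL) ≤ γ_t ≤ 1/(4L)` achieves
`f(x̄_T) - f(x*) ≤ 2CLD/T²`. -/
theorem accelerated_unconstrained_rate {n : ℕ}
    (f : EuclideanSpace ℝ (Fin n) → ℝ)
    (hconv : ConvexOn ℝ Set.univ f)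
    (hlsc : LowerSemicontinuous f)
    -- f is L-smooth with respect to the Euclidean norm
    (L : ℝ) (hL : 0 < L)
    (hdiff : Differentiable ℝ f)
    (hsmooth : ∀ u v, ‖gradient f u - gradient f v‖ ≤ L * ‖u - v‖)
    -- x* minimizes f
    (xstar : EuclideanSpace ℝ (Fin n)) (hmin : ∀ w, f xstar ≤ f w)
    (T : ℕ) (hT : 1 ≤ T)
    (C : ℝ) (hC : 4 < C)
    (γ : ℕ → ℝ)
    (hγ : ∀ t ∈ Icc 1 T, 1 / (C * L) ≤ γ t ∧ γ t ≤ 1 / (4 * L))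
    (hγmono : ∀ s ∈ Icc 1 T, ∀ t ∈ Icc 1 T, s ≤ t → γ t ≤ γ s)
    (A : ℕ → ℝ) (hA : ∀ t, A t = (t : ℝ) * (t + 1) / 2)
    -- the iteration
    (x xtil : ℕ → EuclideanSpace ℝ (Fin n))
    (hxtil : ∀ t, 1 ≤ t →
      xtil t = (A t)⁻¹ • ((t : ℝ) • x (t - 1) + ∑ s ∈ Icc 1 (t - 1), (s : ℝ) • x s))
    (hx : ∀ t ∈ Icc 1 T, x t = x (t - 1) - (γ t * (t : ℝ)) • gradient f (xtil t))
    (D : ℝ) (hD : ∀ t ≤ T, (1 / 2) * ‖x t - xstar‖ ^ 2 ≤ D)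
    (xbar : EuclideanSpace ℝ (Fin n))
    (hxbar : xbar = (A T)⁻¹ • ∑ t ∈ Icc 1 T, (t : ℝ) • x t) :
    f xbar - f xstar ≤ 2 * C * L * D / (T : ℝ) ^ 2 := by
  have hC0 : (0:ℝ) < C := by linarith
  have hCL : 0 < C * L := mul_pos hC0 hL
  have hD0 : 0 ≤ D := le_trans (by positivity) (hD 0 (Nat.zero_le T))
  set S : ℕ → EuclideanSpace ℝ (Fin n) := fun t => ∑ s ∈ Icc 1 t, (s : ℝ) • x s with hSdef
  set d : ℕ → ℝ := fun t => ‖x t - xstar‖ ^ 2 with hddef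
  have hdnn : ∀ t, 0 ≤ d t := fun t => by simp only [hddef]; positivity
  have hd2D : ∀ t ≤ T, d t ≤ 2 * D := fun t ht => by
    have := hD t ht; simp only [hddef]; linarith
  have hγpos : ∀ t ∈ Icc 1 T, 0 < γ t := fun t ht =>
    lt_of_lt_of_le (by positivity) (hγ t ht).1
  have hS0 : S 0 = 0 := by simp [hSdef]
  have hA0 : A 0 = 0 := by rw [hA]; norm_num
  have hApos : ∀ t : ℕ, 1 ≤ t → 0 < A t := by
    intro t ht
    rw [hA]
    have ht' : (0:ℝ) < t := by exact_mod_cast ht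
    positivity
  have hAnn : ∀ t : ℕ, 0 ≤ A t := by
    intro t; rw [hA]; positivity
  have hArec : ∀ t : ℕ, 1 ≤ t → A t = A (t-1) + (t:ℝ) := by
    intro t ht
    obtain ⟨k, rfl⟩ : ∃ k, t = k + 1 := ⟨t - 1, by omega⟩
    rw [hA, hA, Nat.add_sub_cancel]
    push_cast
    ring
  have hSrec : ∀ t : ℕ, 1 ≤ t → S t = S (t-1) + (t:ℝ) • x t := by
    intro t ht
    obtain ⟨k, rfl⟩ : ∃ k, t = k + 1 := ⟨t - 1, by omega⟩
    simp only [hSdef, Nat.add_sub_cancel]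
    exact Finset.sum_Icc_succ_top (by omega) _
  -- the per-step inequality
  have step : ∀ t ∈ Icc 1 T,
      A t * f ((A t)⁻¹ • S t) ≤ A (t-1) * f ((A (t-1))⁻¹ • S (t-1))
        + (t:ℝ) * f xstar + 1/(2 * γ t) * (d (t-1) - d t) := by
    intro t htmem
    obtain ⟨ht1, htT⟩ := Finset.mem_Icc.mp htmem
    set a : EuclideanSpace ℝ (Fin n) := xtil t with ha
    set gt : EuclideanSpace ℝ (Fin n) := gradient f a with hgt
    set G2 : ℝ := ‖gt‖ ^ 2 with hG2
    have hG2nn : 0 ≤ G2 := by positivity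
    have hAt : 0 < A t := hApos t ht1
    have hAtm : 0 ≤ A (t-1) := hAnn (t-1)
    have htpos : (0:ℝ) < t := by exact_mod_cast ht1
    have hγt : 0 < γ t := hγpos t htmem
    have hγub : γ t ≤ 1 / (4*L) := (hγ t htmem).2
    have hxup : x t = x (t-1) - (γ t * (t:ℝ)) • gt := hx t htmem
    have haeq : A t • a = (t:ℝ) • x (t-1) + S (t-1) := by
      rw [ha, hxtil t ht1, smul_inv_smul₀ hAt.ne']
    set xb : EuclideanSpace ℝ (Fin n) := (A t)⁻¹ • S t with hxbd
    set xbp : EuclideanSpace ℝ (Fin n) := (A (t-1))⁻¹ • S (t-1) with hxbpd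
    have hSt : A t • xb = S t := smul_inv_smul₀ hAt.ne' _
    have hPrev : A (t-1) • xbp = S (t-1) := by
      rcases Nat.eq_zero_or_pos (t-1) with h0 | hpos
      · rw [hxbpd, h0, hS0, hA0]; simp
      · exact smul_inv_smul₀ (hApos _ hpos).ne' _
    -- vector facts
    have hVd : A t • (xb - a) = (-(γ t * (t:ℝ)^2)) • gt := by
      rw [smul_sub, hSt, haeq, hSrec t ht1, hxup]
      module
    have hV : (t:ℝ) • (x t - xstar) =
        A t • (xb - a) - A (t-1) • (xbp - a) - (t:ℝ) • (xstar - a) := by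
      rw [smul_sub (A t), hSt, hSrec t ht1, smul_sub (A (t-1)), hPrev,
        hArec t ht1]
      module
    -- scalar abbreviations
    set P : ℝ := ⟪gt, x t - xstar⟫ with hPd
    set Q : ℝ := ⟪gt, xbp - a⟫ with hQd
    set R : ℝ := ⟪gt, xstar - a⟫ with hRd
    set IB : ℝ := ⟪gt, xb - a⟫ with hIBd
    set NB : ℝ := ‖xb - a‖ ^ 2 with hNBd
    have hxba : xb - a = ((A t)⁻¹ * (-(γ t * (t:ℝ)^2))) • gt := by
      rw [← smul_smul, ← hVd, inv_smul_smul₀ hAt.ne']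
    have hs1 : IB = -(γ t * (t:ℝ)^2 / A t) * G2 := by
      rw [hIBd, hxba, real_inner_smul_right, real_inner_self_eq_norm_sq]
      rw [hG2]
      field_simp
    have hs2 : NB = (γ t * (t:ℝ)^2 / A t)^2 * G2 := by
      rw [hNBd, hxba, norm_smul, mul_pow, Real.norm_eq_abs, sq_abs, hG2]
      field_simp
    have hs5 : (t:ℝ) * P = A t * IB - A (t-1) * Q - (t:ℝ) * R := by
      have h := congrArg (fun w : EuclideanSpace ℝ (Fin n) => ⟪gt, w⟫) hV
      simp only [inner_sub_right, real_inner_smul_right] at h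
      rw [hPd, hQd, hRd, hIBd]
      simp only [inner_sub_right]
      linarith [h]
    have hs3 : d (t-1) = d t + 2*(γ t * (t:ℝ)) * P + (γ t * (t:ℝ))^2 * G2 := by
      have hx0 : x (t-1) - xstar = (x t - xstar) + (γ t * (t:ℝ)) • gt := by
        rw [hxup]; module
      simp only [hddef]
      rw [hx0, norm_add_sq_real, real_inner_smul_right, norm_smul,
        Real.norm_eq_abs, mul_pow, sq_abs]
      rw [real_inner_comm] at hPd
      rw [hG2, ← hPd]
      ring
    -- functional inequalities
    have i1 : f xb ≤ f a + IB + L/2 * NB :=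
      descent_lemma f hdiff L hL.le hsmooth a xb
    have i2 : f a + R ≤ f xstar := convex_grad_ineq f hconv hdiff a xstar
    have i3 : f a + Q ≤ f xbp := convex_grad_ineq f hconv hdiff a xbp
    -- combine
    have htP : (t:ℝ) * P = -(γ t * (t:ℝ)^2) * G2 - A (t-1) * Q - (t:ℝ) * R := by
      rw [hs5, hs1]
      field_simp
    have hXval : d (t-1) - d t = -((γ t)^2 * (t:ℝ)^2) * G2
        - 2 * γ t * (A (t-1) * Q) - 2 * γ t * ((t:ℝ) * R) := by
      linear_combination hs3 + 2 * γ t * htP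
    have hfrac : 1/(2 * γ t) * (d (t-1) - d t)
        = -(γ t * (t:ℝ)^2/2) * G2 - A (t-1) * Q - (t:ℝ) * R := by
      rw [hXval]
      field_simp
    have h4L : L * γ t * (t:ℝ)^2 ≤ A t := by
      have h41 : γ t * (4 * L) ≤ 1 := by
        rw [← le_div_iff₀ (by positivity)]; exact hγub
      rw [hA]
      nlinarith [mul_le_mul_of_nonneg_right h41 (sq_nonneg (t:ℝ)), htpos,
        sq_nonneg (t:ℝ)]
    have hbracket : A t * (L/2 * NB) ≤ (γ t * (t:ℝ)^2/2) * G2 := by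
      rw [hs2]
      rw [show A t * (L/2 * ((γ t * (t:ℝ)^2 / A t)^2 * G2))
          = (L * (γ t)^2 * (t:ℝ)^4 * G2) / (2 * A t) from by field_simp]
      rw [div_le_iff₀ (by positivity)]
      nlinarith [mul_le_mul_of_nonneg_right h4L
        (mul_nonneg (mul_nonneg hγt.le (by positivity : (0:ℝ) ≤ (t:ℝ)^2)) hG2nn)]
    have c1 : A t * f xb ≤ A t * f a + (-(γ t * (t:ℝ)^2) * G2) + A t * (L/2 * NB) := by
      have h := mul_le_mul_of_nonneg_left i1 hAt.le
      have h2 : A t * IB = -(γ t * (t:ℝ)^2) * G2 := by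
        rw [hs1]; field_simp
      have h3 : A t * (f a + IB + L/2 * NB)
          = A t * f a + A t * IB + A t * (L/2 * NB) := by ring
      linarith [h, h2, h3]
    have c2 : (t:ℝ) * f a + (t:ℝ) * R ≤ (t:ℝ) * f xstar := by
      have h := mul_le_mul_of_nonneg_left i2 htpos.le
      have he : (t:ℝ) * (f a + R) = (t:ℝ) * f a + (t:ℝ) * R := by ring
      linarith [h, he]
    have c3 : A (t-1) * f a + A (t-1) * Q ≤ A (t-1) * f xbp := by
      have h := mul_le_mul_of_nonneg_left i3 hAtm
      have he : A (t-1) * (f a + Q) = A (t-1) * f a + A (t-1) * Q := by ring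
      linarith [h, he]
    have hsplit : A t * f a = A (t-1) * f a + (t:ℝ) * f a := by
      rw [hArec t ht1]; ring
    rw [hfrac]
    linarith [c1, c2, c3, hbracket, hsplit]
  -- the telescoping induction
  have key : ∀ m, 1 ≤ m → m ≤ T →
      A m * f ((A m)⁻¹ • S m) ≤ A m * f xstar + 1/(2 * γ m) * (2*D - d m) := by
    intro m hm
    induction m, hm using Nat.le_induction with
    | base =>
      intro h1T
      have h1mem : (1:ℕ) ∈ Icc 1 T := Finset.mem_Icc.mpr ⟨le_refl 1, h1T⟩
      have hstep := step 1 h1mem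
      rw [show (1:ℕ) - 1 = 0 from rfl, hA0] at hstep
      have hA1 : A 1 = 1 := by rw [hA]; norm_num
      have hγ1 := hγpos 1 h1mem
      have hd0 := hd2D 0 (Nat.zero_le T)
      have hc1 : (0:ℝ) ≤ 1/(2 * γ 1) := by positivity
      have hmul := mul_le_mul_of_nonneg_left
        (by linarith : d 0 - d 1 ≤ 2*D - d 1) hc1
      rw [hA1] at hstep ⊢
      push_cast at hstep
      linarith
    | succ m hm ih =>
      intro hm1T
      have hmT : m ≤ T := le_trans (Nat.le_succ m) hm1T
      have ihm := ih hmT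
      have hm1mem : m + 1 ∈ Icc 1 T := Finset.mem_Icc.mpr ⟨by omega, hm1T⟩
      have hmmem : m ∈ Icc 1 T := Finset.mem_Icc.mpr ⟨hm, hmT⟩
      have hstep := step (m+1) hm1mem
      rw [show m + 1 - 1 = m from rfl] at hstep
      have hγm := hγpos m hmmem
      have hγm1 := hγpos (m+1) hm1mem
      have hmono := hγmono m hmmem (m+1) hm1mem (Nat.le_succ m)
      have hcc : 1/(2 * γ m) ≤ 1/(2 * γ (m+1)) :=
        one_div_le_one_div_of_le (by linarith) (by linarith)
      have hdm := hd2D m hmT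
      have hAc : A (m+1) = A m + ((m+1 : ℕ) : ℝ) := hArec (m+1) (by omega)
      have hAsplit : A (m+1) * f xstar = A m * f xstar + ((m+1 : ℕ) : ℝ) * f xstar := by
        rw [hAc]; ring
      nlinarith [hstep, ihm, hAsplit,
        mul_nonneg (sub_nonneg.mpr hcc) (by linarith : (0:ℝ) ≤ 2*D - d m)]
  -- conclusion
  have hTmem : T ∈ Icc 1 T := Finset.mem_Icc.mpr ⟨hT, le_rfl⟩
  have hkey := key T hT le_rfl
  have hAT : 0 < A T := hApos T hT
  have hγT := hγpos T hTmem
  have hγTlb := (hγ T hTmem).1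
  have hinv : 1/(γ T) ≤ C * L := by
    have := one_div_le_one_div_of_le (by positivity : (0:ℝ) < 1/(C*L)) hγTlb
    rwa [one_div_one_div] at this
  have hxbar' : xbar = (A T)⁻¹ • S T := hxbar
  have hbar : A T * f xbar ≤ A T * f xstar + C * L * D := by
    rw [hxbar']
    have h1 : 1/(2 * γ T) * (2*D - d T) ≤ 1/(2 * γ T) * (2*D) :=
      mul_le_mul_of_nonneg_left (by linarith [hdnn T]) (by positivity)
    have h2 : 1/(2 * γ T) * (2*D) = D * (1/γ T) := by
      field_simp
    have h3 : D * (1/γ T) ≤ D * (C*L) := mul_le_mul_of_nonneg_left hinv hD0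
    calc A T * f ((A T)⁻¹ • S T) ≤ A T * f xstar + 1/(2 * γ T) * (2*D - d T) := hkey
      _ ≤ A T * f xstar + D * (1/γ T) := by rw [← h2]; linarith
      _ ≤ A T * f xstar + C * L * D := by
          have : D * (C*L) = C * L * D := by ring
          linarith [h3, this]
  have hfinal : f xbar - f xstar ≤ C * L * D / A T := by
    rw [le_div_iff₀ hAT]
    have : (f xbar - f xstar) * A T = A T * f xbar - A T * f xstar := by ring
    linarith [hbar, this]
  have hTpos : (0:ℝ) < (T:ℝ) := by exact_mod_cast hT
  calc f xbar - f xstar ≤ C * L * D / A T := hfinal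
    _ ≤ 2 * C * L * D / (T:ℝ)^2 := by
        rw [hA, div_le_div_iff₀ (by positivity) (by positivity)]
        nlinarith [mul_nonneg (mul_nonneg (mul_nonneg hC0.le hL.le) hD0) hTpos.le,
          hTpos]
end

section
/- Let f : ℝ^n → ℝ be differentiable, let α_t = t, A_t = t(t+1)/2, and γ_t = (t+1)/(8Lt). From x_0, define x_t = x_{t−1} − γ_t α_t ∇f(x̃_t), where x̃_t = (1/A_t)(α_t x_{t−1} + Σ_{s=1}^{t−1} α_s x_s), and let x̄_t = (1/A_t) Σ_{s=1}^t α_s x_s, with x̄_0 = x_0. Then for every t ≥ 1 the weighted averages obey the momentum recursion x̄_t = x̄_{t−1} − (1/(4L)) ∇f(x̃_t) + ((t−2)/(t+1)) (x̄_{t−1} − x̄_{t−2}). -/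
open Finset

/-- with `α_t = t`, `A_t = t(t+1)/2` and `γ_t = (t+1)/(8Lt)`, the iterates
`x_t = x_{t-1} - γ_t α_t ∇f(x̃_t)` have weighted averages obeying the momentum recursion
`x̄_t = x̄_{t-1} - (1/(4L)) ∇f(x̃_t) + ((t-2)/(t+1))(x̄_{t-1} - x̄_{t-2})`. -/
theorem weighted_average_momentum_recursion {n : ℕ}
    (f : EuclideanSpace ℝ (Fin n) → ℝ) (hdiff : Differentiable ℝ f)
    (L : ℝ) (hL : 0 < L)
    (A : ℕ → ℝ) (hA : ∀ t, A t = (t : ℝ) * (t + 1) / 2)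
    (γ : ℕ → ℝ) (hγ : ∀ t, 1 ≤ t → γ t = ((t : ℝ) + 1) / (8 * L * t))
    (x xtil xbar : ℕ → EuclideanSpace ℝ (Fin n))
    (hxtil : ∀ t, 1 ≤ t →
      xtil t = (A t)⁻¹ • ((t : ℝ) • x (t - 1) + ∑ s ∈ Icc 1 (t - 1), (s : ℝ) • x s))
    (hx : ∀ t, 1 ≤ t → x t = x (t - 1) - (γ t * (t : ℝ)) • gradient f (xtil t))
    (hxbar0 : xbar 0 = x 0)
    (hxbar : ∀ t, 1 ≤ t → xbar t = (A t)⁻¹ • ∑ s ∈ Icc 1 t, (s : ℝ) • x s) :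
    ∀ t, 1 ≤ t →
      xbar t = xbar (t - 1) - (1 / (4 * L)) • gradient f (xtil t)
        + (((t : ℝ) - 2) / ((t : ℝ) + 1)) • (xbar (t - 1) - xbar (t - 2)) := by
  have hLne : L ≠ 0 := hL.ne'
  -- key identity: A t • xbar t = weighted sum, for all t (including t = 0)
  have key : ∀ t, A t • xbar t = ∑ s ∈ Icc 1 t, (s : ℝ) • x s := by
    intro t
    rcases Nat.eq_zero_or_pos t with h | h
    · subst h; simp [hA]
    · have hne : A t ≠ 0 := by
        rw [hA]
        have ht : (0 : ℝ) < (t : ℝ) := by exact_mod_cast h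
        positivity
      rw [hxbar t h, smul_inv_smul₀ hne]
  intro t ht
  match t, ht with
  | 1, _ =>
      have hA1 : A 1 = 1 := by rw [hA]; norm_num
      have hx1 : x 1 = x 0 - (1 / (4 * L)) • gradient f (xtil 1) := by
        rw [hx 1 le_rfl]
        congr 2
        rw [hγ 1 le_rfl]
        field_simp
        ring
      have hb1 : xbar 1 = x 1 := by
        rw [hxbar 1 le_rfl, hA1]
        simp
      simp only [hb1, hx1, hxbar0]
      push_cast
      norm_num
  | (k + 2), _ =>
      set g := gradient f (xtil (k + 2)) with hg
      set K := (k : ℝ) with hK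
      have hK0 : (0 : ℝ) ≤ K := Nat.cast_nonneg k
      have hsum : ∑ s ∈ Icc 1 (k + 2), (s : ℝ) • x s
          = (∑ s ∈ Icc 1 (k + 1), (s : ℝ) • x s) + ((k + 2 : ℕ) : ℝ) • x (k + 2) := by
        rw [Finset.sum_Icc_succ_top (by omega : 1 ≤ k + 2)]
      have h1 : ((K + 2) * (K + 3) / 2) • xbar (k + 2)
          = ((K + 1) * (K + 2) / 2) • xbar (k + 1) + (K + 2) • x (k + 2) := by
        have e1 := key (k + 2)
        have e2 := key (k + 1)
        rw [hsum, ← e2] at e1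
        have hA2 : A (k + 2) = (K + 2) * (K + 3) / 2 := by
          rw [hA]; push_cast; ring
        have hA1' : A (k + 1) = (K + 1) * (K + 2) / 2 := by
          rw [hA]; push_cast; ring
        rw [hA2, hA1'] at e1
        have hc2 : ((k + 2 : ℕ) : ℝ) = K + 2 := by push_cast; ring
        rw [hc2] at e1
        exact e1
      have h3 : (K + 1) • x (k + 1)
          = ((K + 1) * (K + 2) / 2) • xbar (k + 1) - (K * (K + 1) / 2) • xbar k := by
        have e2 := key (k + 1)
        have e3 := key k
        have hsum' : ∑ s ∈ Icc 1 (k + 1), (s : ℝ) • x s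
            = (∑ s ∈ Icc 1 k, (s : ℝ) • x s) + ((k + 1 : ℕ) : ℝ) • x (k + 1) := by
          rw [Finset.sum_Icc_succ_top (by omega : 1 ≤ k + 1)]
        rw [hsum', ← e3] at e2
        have hA1' : A (k + 1) = (K + 1) * (K + 2) / 2 := by
          rw [hA]; push_cast; ring
        have hAk : A k = K * (K + 1) / 2 := by
          rw [hA]
        rw [hA1', hAk] at e2
        have hc1 : ((k + 1 : ℕ) : ℝ) = K + 1 := by push_cast; ring
        rw [hc1] at e2
        linear_combination (norm := module) (-1 : ℝ) • e2
      have h2 : x (k + 2) = x (k + 1) - ((K + 3) / (8 * L)) • g := by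
        have hh := hx (k + 2) (by omega)
        rw [show k + 2 - 1 = k + 1 from rfl] at hh
        rw [hh]
        congr 2
        rw [hγ (k + 2) (by omega)]
        have hK2 : (K + 2 : ℝ) ≠ 0 := by positivity
        push_cast
        field_simp
        ring
      have hc : ((K + 1) * (K + 2) * (K + 3) / 2 : ℝ) ≠ 0 := by positivity
      have hgoal : ((K + 1) * (K + 2) * (K + 3) / 2 : ℝ) •
            (xbar (k + 2))
          = ((K + 1) * (K + 2) * (K + 3) / 2 : ℝ) •
            (xbar (k + 1) - (1 / (4 * L)) • g
              + ((((k + 2 : ℕ) : ℝ) - 2) / (((k + 2 : ℕ) : ℝ) + 1)) • (xbar (k + 1) - xbar k)) := by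
        have hcast : ((k + 2 : ℕ) : ℝ) = K + 2 := by push_cast; ring
        rw [hcast]
        have hK3 : (K + 3 : ℝ) ≠ 0 := by positivity
        linear_combination (norm := skip) ((K + 1) : ℝ) • h1
          + (((K + 1) * (K + 2)) : ℝ) • h2 + ((K + 2) : ℝ) • h3
        match_scalars <;>
          · field_simp
            try ring
      have hfin := smul_right_injective (EuclideanSpace ℝ (Fin n)) hc hgoal
      rw [show k + 2 - 1 = k + 1 from rfl, show k + 2 - 2 = k from rfl]
      exact hfin
end

section
/- Let f : ℝ^n → ℝ be differentiable and let L > 0. Consider Nesterov's 1983 iteration: w_0 = z_0, and for t ≥ 1, w_t = z_{t−1} − (1/(4L)) ∇f(z_{t−1}) and z_t = w_t + ((t−1)/(t+2))(w_t − w_{t−1}). Consider also the game iteration with α_t = t, A_t = t(t+1)/2, γ_t = (t+1)/(8Lt): from x_0, x_t = x_{t−1} − γ_t α_t ∇f(x̃_t) where x̃_t = (1/A_t)(α_t x_{t−1} + Σ_{s=1}^{t−1} α_s x_s), and x̄_t = (1/A_t) Σ_{s=1}^t α_s x_s. If the initializations agree, w_0 = z_0 = x_0 = x̄_0 = x̃_1,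 then for all t = 1, …, T one has w_t = x̄_t and z_{t−1} = x̃_t. -/
open Finset

/-- Theorem 5: Nesterov's 1983 method with step `θ = 1/(4L)` is equivalent to
the Fenchel-game iteration with `α_t = t`, `γ_t = (t+1)/(8Lt)`: if the initializations agree
then `w_t = x̄_t` and `z_{t-1} = x̃_t` for all `t = 1, …, T`. -/
theorem nesterov1983_equals_game {n : ℕ}
    (f : EuclideanSpace ℝ (Fin n) → ℝ) (hdiff : Differentiable ℝ f)
    (L : ℝ) (hL : 0 < L) (T : ℕ)
    -- Nesterov's (1983) iteration
    (w z : ℕ → EuclideanSpace ℝ (Fin n))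
    (hw : ∀ t, 1 ≤ t → w t = z (t - 1) - (1 / (4 * L)) • gradient f (z (t - 1)))
    (hz : ∀ t, 1 ≤ t → z t = w t + (((t : ℝ) - 1) / ((t : ℝ) + 2)) • (w t - w (t - 1)))
    -- the game iteration
    (A : ℕ → ℝ) (hA : ∀ t, A t = (t : ℝ) * (t + 1) / 2)
    (γ : ℕ → ℝ) (hγ : ∀ t, 1 ≤ t → γ t = ((t : ℝ) + 1) / (8 * L * t))
    (x xtil xbar : ℕ → EuclideanSpace ℝ (Fin n))
    (hxtil : ∀ t, 1 ≤ t →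
      xtil t = (A t)⁻¹ • ((t : ℝ) • x (t - 1) + ∑ s ∈ Icc 1 (t - 1), (s : ℝ) • x s))
    (hx : ∀ t, 1 ≤ t → x t = x (t - 1) - (γ t * (t : ℝ)) • gradient f (xtil t))
    (hxbar0 : xbar 0 = x 0)
    (hxbar : ∀ t, 1 ≤ t → xbar t = (A t)⁻¹ • ∑ s ∈ Icc 1 t, (s : ℝ) • x s)
    -- matching initializations: w_0 = z_0 = x_0 (= x̄_0 = x̃_1 automatically)
    (hinit_w : w 0 = x 0) (hinit_z : z 0 = x 0) :
    ∀ t, 1 ≤ t → t ≤ T → w t = xbar t ∧ z (t - 1) = xtil t := by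
  have hLne : L ≠ 0 := ne_of_gt hL
  set S : ℕ → EuclideanSpace ℝ (Fin n) := fun t => ∑ s ∈ Icc 1 t, (s : ℝ) • x s with hSdef
  have hSsucc : ∀ t : ℕ, S (t + 1) = S t + ((t : ℝ) + 1) • x (t + 1) := by
    intro t
    simp only [hSdef]
    rw [Finset.sum_Icc_succ_top (by omega : 1 ≤ t + 1)]
    push_cast
    ring_nf
  have hAne : ∀ t : ℕ, 1 ≤ t → A t ≠ 0 := by
    intro t ht
    rw [hA]
    have : (0:ℝ) < (t:ℝ) := by exact_mod_cast ht
    positivity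
  have hSbar : ∀ t : ℕ, S t = A t • xbar t := by
    intro t
    cases t with
    | zero => simp [hSdef, hA]
    | succ k =>
      rw [hxbar (k + 1) (by omega), smul_smul, mul_inv_cancel₀ (hAne _ (by omega)), one_smul]
  have key : ∀ t : ℕ, w t = xbar t ∧ z t = xtil (t + 1) := by
    intro t
    induction t with
    | zero =>
      refine ⟨by rw [hinit_w, hxbar0], ?_⟩
      rw [hinit_z, hxtil 1 le_rfl]
      simp [hA]
    | succ k ih =>
      obtain ⟨ihw, ihz⟩ := ih
      set g := gradient f (xtil (k + 1)) with hg
      have hwk : w (k + 1) = xtil (k + 1) - (2 / (8 * L)) • g := by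
        rw [hw (k + 1) (by omega)]
        have h48 : (1:ℝ) / (4 * L) = 2 / (8 * L) := by field_simp; ring
        simp only [Nat.add_sub_cancel, ihz, h48, ← hg]
      have hγk : γ (k + 1) * ((k + 1 : ℕ) : ℝ) = ((k : ℝ) + 2) / (8 * L) := by
        rw [hγ (k + 1) (by omega)]
        have hk1 : ((k : ℝ) + 1) ≠ 0 := by positivity
        push_cast
        field_simp
        ring
      have hxk : x (k + 1) = x k - (((k : ℝ) + 2) / (8 * L)) • g := by
        rw [hx (k + 1) (by omega), hγk]
        simp only [Nat.add_sub_cancel, ← hg]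
      have htil1 : A (k + 1) • xtil (k + 1) = ((k : ℝ) + 1) • x k + S k := by
        rw [hxtil (k + 1) (by omega), smul_smul, mul_inv_cancel₀ (hAne _ (by omega)), one_smul]
        simp only [Nat.add_sub_cancel, hSdef]
        push_cast
        ring_nf
      have hA1 : A (k + 1) = ((k : ℝ) + 1) * ((k : ℝ) + 2) / 2 := by
        rw [hA]; push_cast; ring
      have hA2 : A (k + 2) = ((k : ℝ) + 2) * ((k : ℝ) + 3) / 2 := by
        rw [hA]; push_cast; ring
      have hA0 : A k = (k : ℝ) * ((k : ℝ) + 1) / 2 := by rw [hA]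
      -- first claim: w (k+1) = xbar (k+1)
      have goal1 : w (k + 1) = xbar (k + 1) := by
        apply smul_right_injective (EuclideanSpace ℝ (Fin n)) (hAne (k + 1) (by omega))
        show A (k + 1) • w (k + 1) = A (k + 1) • xbar (k + 1)
        rw [← hSbar (k + 1), hSsucc k, hwk, smul_sub, htil1, smul_smul, hxk, hA1]
        match_scalars <;> field_simp <;> ring
      refine ⟨goal1, ?_⟩
      -- second claim: z (k+1) = xtil (k+2)
      have hzk : z (k + 1) = xbar (k + 1) +
          ((k : ℝ) / ((k : ℝ) + 3)) • (xbar (k + 1) - xbar k) := by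
        rw [hz (k + 1) (by omega)]
        simp only [Nat.add_sub_cancel, goal1, ihw]
        push_cast
        ring_nf
      have hx1 : ((k : ℝ) + 1) • x (k + 1) = A (k + 1) • xbar (k + 1) - A k • xbar k := by
        have := hSsucc k
        rw [hSbar (k + 1), hSbar k] at this
        rw [eq_sub_iff_add_eq, add_comm, ← this]
      have htil2 : (((k : ℝ) + 1) * A (k + 2)) • xtil (k + 2) =
          ((k : ℝ) + 2) • (A (k + 1) • xbar (k + 1) - A k • xbar k)
            + (((k : ℝ) + 1) * A (k + 1)) • xbar (k + 1) := by
        rw [hxtil (k + 2) (by omega)]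
        have : (k + 2 - 1 : ℕ) = k + 1 := by omega
        rw [this, smul_smul, mul_assoc, mul_inv_cancel₀ (hAne _ (by omega)), mul_one]
        have hsum : ∑ s ∈ Icc 1 (k + 1), (s : ℝ) • x s = A (k + 1) • xbar (k + 1) :=
          hSbar (k + 1)
        rw [hsum, ← hx1]
        push_cast
        match_scalars <;> ring
      have hc : ((k : ℝ) + 1) * A (k + 2) ≠ 0 := by
        rw [hA2]
        positivity
      apply smul_right_injective (EuclideanSpace ℝ (Fin n)) hc
      show (((k : ℝ) + 1) * A (k + 2)) • z (k + 1) = (((k : ℝ) + 1) * A (k + 2)) • xtil (k + 2)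
      rw [htil2, hzk, hA0, hA1, hA2]
      have h3 : ((k : ℝ) + 3) ≠ 0 := by positivity
      match_scalars <;> field_simp <;> ring
  intro t ht _
  refine ⟨(key t).1, ?_⟩
  have h := (key (t - 1)).2
  rwa [Nat.sub_add_cancel ht] at h
end

section
/- Let 𝒦 ⊆ ℝ^d be convex, let R : 𝒦 → ℝ be β-strongly convex with respect to a norm ‖·‖, let η > 0, and let θ_1, …, θ_T ∈ ℝ^d be arbitrary loss vectors with cumulative sums L_t = Σ_{s=1}^t θ_s. Let the Be-The-Regularized-Leader iterates be x_t = argmin_{x ∈ 𝒦} [⟨x, L_t⟩ + (1/η) R(x)] for t ≥ 1, and set x_0 = z = argmin_{x ∈ 𝒦} R(x). Then for every x* ∈ 𝒦, Σ_{t=1}^T ⟨x_t − x*, θ_t⟩ ≤ ( R(x*) − R(z) − (β/2) Σ_{t=1}^T ‖x_t − x_{t−1}‖² ) / η. -/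
open scoped RealInnerProductSpace
open Finset

/-- A minimizer of a strongly convex objective over a convex set satisfies a
quadratic growth bound. -/
lemma btrl_key_min {d : ℕ}
    (K : Set (EuclideanSpace ℝ (Fin d))) (hK : Convex ℝ K)
    (N : EuclideanSpace ℝ (Fin d) → ℝ)
    (R : EuclideanSpace ℝ (Fin d) → ℝ) (β : ℝ) (hβ : 0 < β)
    (hR : ∀ u ∈ K, ∀ v ∈ K, ∀ a : ℝ, 0 ≤ a → a ≤ 1 →
      R (a • u + (1 - a) • v)
        ≤ a * R u + (1 - a) * R v - β / 2 * a * (1 - a) * (N (u - v)) ^ 2)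
    (η : ℝ) (hη : 0 < η)
    (L y : EuclideanSpace ℝ (Fin d)) (hy : y ∈ K)
    (hmin : ∀ w ∈ K, ⟪y, L⟫ + (1 / η) * R y ≤ ⟪w, L⟫ + (1 / η) * R w) :
    ∀ w ∈ K, ⟪y, L⟫ + (1 / η) * R y + β / (2 * η) * (N (w - y)) ^ 2
      ≤ ⟪w, L⟫ + (1 / η) * R w := by
  intro w hw
  set C : ℝ := β / (2 * η) * (N (w - y)) ^ 2 with hCdef
  have hCnn : 0 ≤ C := mul_nonneg (by positivity) (sq_nonneg _)
  set P : ℝ := ⟪y, L⟫ + (1 / η) * R y with hPdef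
  set Q : ℝ := ⟪w, L⟫ + (1 / η) * R w with hQdef
  have hstep : ∀ a : ℝ, 0 < a → a ≤ 1 → P + C ≤ Q + a * C := by
    intro a ha ha1
    have hmem : a • w + (1 - a) • y ∈ K := hK hw hy ha.le (by linarith) (by ring)
    have h1 := hmin _ hmem
    have hinner : ⟪a • w + (1 - a) • y, L⟫ = a * ⟪w, L⟫ + (1 - a) * ⟪y, L⟫ := by
      rw [inner_add_left, real_inner_smul_left, real_inner_smul_left]
    rw [hinner] at h1
    have h2 := hR w hw y hy a ha.le ha1
    have h3 : (1 / η) * R (a • w + (1 - a) • y)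
        ≤ (1 / η) * (a * R w + (1 - a) * R y - β / 2 * a * (1 - a) * (N (w - y)) ^ 2) :=
      mul_le_mul_of_nonneg_left h2 (by positivity)
    have h7 : a * ⟪w, L⟫ + (1 - a) * ⟪y, L⟫
        + (1 / η) * (a * R w + (1 - a) * R y - β / 2 * a * (1 - a) * (N (w - y)) ^ 2)
        = a * Q + (1 - a) * P - a * (1 - a) * C := by
      rw [hQdef, hPdef, hCdef]; ring
    have h8 : P ≤ a * Q + (1 - a) * P - a * (1 - a) * C := by
      rw [← h7]; linarith
    have h5 : 0 ≤ a * (Q + a * C - (P + C)) := by nlinarith [h8]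
    have h6 := (mul_nonneg_iff_of_pos_left ha).mp h5
    linarith
  by_contra hcon
  push_neg at hcon
  set ε : ℝ := P + C - Q with hεdef
  have hε : 0 < ε := by simp only [hεdef]; linarith
  set a : ℝ := min 1 (ε / (2 * (C + 1))) with hadef
  have ha0 : 0 < a := lt_min one_pos (by positivity)
  have ha1 : a ≤ 1 := min_le_left _ _
  have ha2 : a ≤ ε / (2 * (C + 1)) := min_le_right _ _
  have ha3 : a * (2 * (C + 1)) ≤ ε := by
    rw [← le_div_iff₀ (by positivity)]; exact ha2
  have := hstep a ha0 ha1
  nlinarith [mul_nonneg ha0.le hCnn]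

/-- regret bound for Be-The-Regularized-Leader with a `β`-strongly convex
regularizer `R` (w.r.t. a norm `N`): for every `x* ∈ 𝒦`,
`Σ_t ⟪x_t - x*, θ_t⟫ ≤ (R(x*) - R(z) - (β/2) Σ_t N(x_t - x_{t-1})²)/η`. -/
theorem btrl_regret {d : ℕ}
    (K : Set (EuclideanSpace ℝ (Fin d))) (hK : Convex ℝ K)
    (N : EuclideanSpace ℝ (Fin d) → ℝ)
    -- N is a norm
    (hN_add : ∀ u v, N (u + v) ≤ N u + N v)
    (hN_smul : ∀ (a : ℝ) (u : EuclideanSpace ℝ (Fin d)), N (a • u) = |a| * N u)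
    (hN_zero : ∀ u, N u = 0 → u = 0)
    -- R is β-strongly convex with respect to N on K
    (R : EuclideanSpace ℝ (Fin d) → ℝ) (β : ℝ) (hβ : 0 < β)
    (hR : ∀ u ∈ K, ∀ v ∈ K, ∀ a : ℝ, 0 ≤ a → a ≤ 1 →
      R (a • u + (1 - a) • v)
        ≤ a * R u + (1 - a) * R v - β / 2 * a * (1 - a) * (N (u - v)) ^ 2)
    (η : ℝ) (hη : 0 < η)
    (T : ℕ)
    (θ : ℕ → EuclideanSpace ℝ (Fin d))
    (Lvec : ℕ → EuclideanSpace ℝ (Fin d)) (hLvec : ∀ t, Lvec t = ∑ s ∈ Icc 1 t, θ s)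
    -- z minimizes R over K, and x_0 = z
    (z : EuclideanSpace ℝ (Fin d)) (hzK : z ∈ K) (hz : ∀ w ∈ K, R z ≤ R w)
    (x : ℕ → EuclideanSpace ℝ (Fin d)) (hx0 : x 0 = z)
    -- the Be-The-Regularized-Leader iterates
    (hx : ∀ t, 1 ≤ t → t ≤ T → x t ∈ K ∧ ∀ w ∈ K,
      ⟪x t, Lvec t⟫ + (1 / η) * R (x t) ≤ ⟪w, Lvec t⟫ + (1 / η) * R w) :
    ∀ xstar ∈ K,
      ∑ t ∈ Icc 1 T, ⟪x t - xstar, θ t⟫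
        ≤ (R xstar - R z - β / 2 * ∑ t ∈ Icc 1 T, (N (x t - x (t - 1))) ^ 2) / η := by
  intro xstar hxstar
  -- unified minimizer property for all 0 ≤ t ≤ T
  have hminAll : ∀ t, t ≤ T → x t ∈ K ∧ ∀ w ∈ K,
      ⟪x t, Lvec t⟫ + (1 / η) * R (x t) ≤ ⟪w, Lvec t⟫ + (1 / η) * R w := by
    intro t ht
    rcases Nat.eq_zero_or_pos t with h0 | h1
    · subst h0
      have hL0 : Lvec 0 = 0 := by simp [hLvec]
      refine ⟨hx0 ▸ hzK, ?_⟩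
      intro w hw
      rw [hL0, inner_zero_right, inner_zero_right, hx0]
      have := hz w hw
      have h1η : (0:ℝ) ≤ 1 / η := by positivity
      nlinarith
    · exact hx t h1 ht
  -- main induction
  have claim : ∀ t, t ≤ T →
      (∑ s ∈ Icc 1 t, ⟪x s, θ s⟫) + (1 / η) * R z
        + β / (2 * η) * ∑ s ∈ Icc 1 t, (N (x s - x (s - 1))) ^ 2
      ≤ ⟪x t, Lvec t⟫ + (1 / η) * R (x t) := by
    intro t
    induction t with
    | zero =>
      intro _
      simp [hLvec, hx0]
    | succ n ih =>
      intro hnT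
      have hn : n ≤ T := Nat.le_of_succ_le hnT
      have ihn := ih hn
      have hmem := (hminAll (n + 1) hnT).1
      have hkey := btrl_key_min K hK N R β hβ hR η hη (Lvec n) (x n)
        (hminAll n hn).1 (hminAll n hn).2 (x (n + 1)) hmem
      have hsum1 : ∑ s ∈ Icc 1 (n + 1), ⟪x s, θ s⟫
          = (∑ s ∈ Icc 1 n, ⟪x s, θ s⟫) + ⟪x (n + 1), θ (n + 1)⟫ :=
        Finset.sum_Icc_succ_top (Nat.one_le_iff_ne_zero.mpr (Nat.succ_ne_zero n)) _
      have hsum2 : ∑ s ∈ Icc 1 (n + 1), (N (x s - x (s - 1))) ^ 2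
          = (∑ s ∈ Icc 1 n, (N (x s - x (s - 1))) ^ 2) + (N (x (n + 1) - x n)) ^ 2 := by
        rw [Finset.sum_Icc_succ_top (Nat.one_le_iff_ne_zero.mpr (Nat.succ_ne_zero n))]
        simp
      have hLsucc : Lvec (n + 1) = Lvec n + θ (n + 1) := by
        rw [hLvec, hLvec, Finset.sum_Icc_succ_top (Nat.one_le_iff_ne_zero.mpr (Nat.succ_ne_zero n))]
      have hinner : ⟪x (n + 1), Lvec (n + 1)⟫
          = ⟪x (n + 1), Lvec n⟫ + ⟪x (n + 1), θ (n + 1)⟫ := by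
        rw [hLsucc, inner_add_right]
      rw [hsum1, hsum2, hinner]
      linarith
  have hfin := claim T le_rfl
  have hT := (hminAll T le_rfl).2 xstar hxstar
  have hinstar : ⟪xstar, Lvec T⟫ = ∑ t ∈ Icc 1 T, ⟪xstar, θ t⟫ := by
    rw [hLvec, inner_sum]
  rw [hinstar] at hT
  have hsub : ∑ t ∈ Icc 1 T, ⟪x t - xstar, θ t⟫
      = (∑ t ∈ Icc 1 T, ⟪x t, θ t⟫) - ∑ t ∈ Icc 1 T, ⟪xstar, θ t⟫ := by
    rw [← Finset.sum_sub_distrib]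
    congr 1; ext t; rw [inner_sub_left]
  rw [hsub]
  have hdiv : (R xstar - R z - β / 2 * ∑ t ∈ Icc 1 T, (N (x t - x (t - 1))) ^ 2) / η
      = (1 / η) * R xstar - (1 / η) * R z
        - β / (2 * η) * ∑ t ∈ Icc 1 T, (N (x t - x (t - 1))) ^ 2 := by
    field_simp
  rw [hdiv]
  linarith
end

section
/- Let 𝒦 ⊆ ℝ^d be convex, let R : 𝒦 → ℝ be β-strongly convex with respect to a norm ‖·‖ (dual norm ‖·‖_*), let η > 0, let θ_1, …, θ_T ∈ ℝ^d be loss vectors with L_t = Σ_{s=1}^t θ_s, and let m_1, …, m_T ∈ ℝ^d be arbitrary guess vectors. Define the Optimistic-FTRL iterates x_t = argmin_{x ∈ 𝒦} [⟨x, L_{t−1} + m_t⟩ + (1/η) R(x)], the FTRL iterates z_t = argmin_{x ∈ 𝒦} [⟨x, L_{t−1}⟩ + (1/η) R(x)] (so z_1 = argmin_{x ∈ 𝒦} R(x)), and D_T = Σ_{t=1}^T [ (β/2)‖x_t − z_t‖² + (β/2)‖x_t − z_{t+1}‖² ]. Then for every x* ∈ 𝒦, Σ_{t=1}^T ⟨x_t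 − x*, θ_t⟩ ≤ ( R(x*) − R(z_1) − D_T ) / η + Σ_{t=1}^T (η/β) ‖θ_t − m_t‖_*². -/
open scoped RealInnerProductSpace
open Finset

section aux
variable {d : ℕ} {N : EuclideanSpace ℝ (Fin d) → ℝ}

lemma aux_N_zero (hN_smul : ∀ (a : ℝ) u, N (a • u) = |a| * N u) : N 0 = 0 := by
  have := hN_smul 0 0
  simpa using this

lemma aux_N_neg (hN_smul : ∀ (a : ℝ) u, N (a • u) = |a| * N u) (u : EuclideanSpace ℝ (Fin d)) :
    N (-u) = N u := by
  have := hN_smul (-1) u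
  simpa using this

lemma aux_N_nonneg (hN_add : ∀ u v, N (u + v) ≤ N u + N v)
    (hN_smul : ∀ (a : ℝ) u, N (a • u) = |a| * N u) (u : EuclideanSpace ℝ (Fin d)) :
    0 ≤ N u := by
  have h := hN_add u (-u)
  rw [add_neg_cancel, aux_N_zero hN_smul, aux_N_neg hN_smul] at h
  linarith

lemma aux_N_sum (hN_add : ∀ u v, N (u + v) ≤ N u + N v)
    (hN_smul : ∀ (a : ℝ) u, N (a • u) = |a| * N u)
    {ι : Type*} (s : Finset ι) (f : ι → EuclideanSpace ℝ (Fin d)) :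
    N (∑ i ∈ s, f i) ≤ ∑ i ∈ s, N (f i) := by
  classical
  induction s using Finset.induction_on with
  | empty => simp [aux_N_zero hN_smul]
  | insert a s hnot ih =>
    rw [Finset.sum_insert hnot, Finset.sum_insert hnot]
    exact (hN_add _ _).trans (by linarith)

lemma aux_N_upper (hN_add : ∀ u v, N (u + v) ≤ N u + N v)
    (hN_smul : ∀ (a : ℝ) u, N (a • u) = |a| * N u) :
    ∃ C : ℝ, 0 ≤ C ∧ ∀ u, N u ≤ C * ‖u‖ := by
  refine ⟨∑ i : Fin d, N (EuclideanSpace.single i (1 : ℝ)), Finset.sum_nonneg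
    (fun i _ => aux_N_nonneg hN_add hN_smul _), fun u => ?_⟩
  have hrep : u = ∑ i : Fin d, u i • EuclideanSpace.single i (1 : ℝ) := by
    ext j
    have : (∑ i : Fin d, u i • EuclideanSpace.single i (1:ℝ)) j
        = ∑ i : Fin d, (u i • EuclideanSpace.single i (1:ℝ)) j := by rw [WithLp.ofLp_sum]; exact Finset.sum_apply j univ _
    rw [this]
    simp [EuclideanSpace.single_apply]
  calc N u = N (∑ i : Fin d, u i • EuclideanSpace.single i (1 : ℝ)) := by rw [← hrep]
    _ ≤ ∑ i : Fin d, N (u i • EuclideanSpace.single i (1 : ℝ)) := aux_N_sum hN_add hN_smul _ _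
    _ = ∑ i : Fin d, |u i| * N (EuclideanSpace.single i (1 : ℝ)) := by
        simp [hN_smul]
    _ ≤ ∑ i : Fin d, ‖u‖ * N (EuclideanSpace.single i (1 : ℝ)) := by
        refine Finset.sum_le_sum fun i _ => ?_
        refine mul_le_mul_of_nonneg_right ?_ (aux_N_nonneg hN_add hN_smul _)
        rw [EuclideanSpace.norm_eq, ← Real.sqrt_sq_eq_abs]
        apply Real.sqrt_le_sqrt
        calc u i ^ 2 = ‖u i‖ ^ 2 := by rw [Real.norm_eq_abs, sq_abs]
          _ ≤ ∑ j : Fin d, ‖u j‖ ^ 2 :=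
            Finset.single_le_sum (f := fun j => ‖u j‖ ^ 2) (fun j _ => sq_nonneg _) (mem_univ i)
    _ = (∑ i : Fin d, N (EuclideanSpace.single i (1 : ℝ))) * ‖u‖ := by
        rw [Finset.sum_mul]
        exact Finset.sum_congr rfl fun i _ => mul_comm _ _

lemma aux_N_continuous (hN_add : ∀ u v, N (u + v) ≤ N u + N v)
    (hN_smul : ∀ (a : ℝ) u, N (a • u) = |a| * N u) : Continuous N := by
  obtain ⟨C, hC0, hC⟩ := aux_N_upper hN_add hN_smul
  have habs : ∀ a b : EuclideanSpace ℝ (Fin d), |N a - N b| ≤ N (a - b) := by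
    intro a b
    rw [abs_sub_le_iff]
    constructor
    · have := hN_add (a - b) b
      simpa using this
    · have := hN_add (b - a) a
      have h2 : N (b - a) = N (a - b) := by
        rw [← neg_sub a b, aux_N_neg hN_smul]
      simp only [sub_add_cancel] at this
      linarith
  have : LipschitzWith C.toNNReal N := by
    apply LipschitzWith.of_dist_le_mul
    intro a b
    rw [Real.dist_eq, dist_eq_norm]
    calc |N a - N b| ≤ N (a - b) := habs a b
      _ ≤ C * ‖a - b‖ := hC _
      _ ≤ C.toNNReal * ‖a - b‖ :=
          mul_le_mul_of_nonneg_right (Real.le_coe_toNNReal C) (norm_nonneg _)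
  exact this.continuous

lemma aux_N_lower (hN_add : ∀ u v, N (u + v) ≤ N u + N v)
    (hN_smul : ∀ (a : ℝ) u, N (a • u) = |a| * N u)
    (hN_zero : ∀ u, N u = 0 → u = 0) :
    ∃ c : ℝ, 0 < c ∧ ∀ u, c * ‖u‖ ≤ N u := by
  rcases Nat.eq_zero_or_pos d with hd | hd
  · refine ⟨1, one_pos, fun u => ?_⟩
    subst hd
    have hu : u = 0 := by
      ext j
      exact j.elim0
    rw [hu]
    simp [aux_N_zero hN_smul]
  · have hne : (Metric.sphere (0 : EuclideanSpace ℝ (Fin d)) 1).Nonempty :=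
      ⟨EuclideanSpace.single ⟨0, hd⟩ (1 : ℝ), by simp [EuclideanSpace.norm_single]⟩
    obtain ⟨p, hp, hmin⟩ := (isCompact_sphere (0 : EuclideanSpace ℝ (Fin d)) 1).exists_isMinOn
      hne (aux_N_continuous hN_add hN_smul).continuousOn
    have hpnorm : ‖p‖ = 1 := by simpa using hp
    have hppos : 0 < N p := by
      rcases (aux_N_nonneg hN_add hN_smul p).lt_or_eq with h | h
      · exact h
      · exfalso
        have := hN_zero p h.symm
        rw [this] at hpnorm
        simp at hpnorm
    refine ⟨N p, hppos, fun u => ?_⟩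
    rcases eq_or_ne u 0 with rfl | hu
    · simp [aux_N_zero hN_smul]
    · have hun : 0 < ‖u‖ := norm_pos_iff.mpr hu
      have hmem : (‖u‖⁻¹ • u) ∈ Metric.sphere (0 : EuclideanSpace ℝ (Fin d)) 1 := by
        simp [norm_smul, abs_of_pos (inv_pos.mpr hun), inv_mul_cancel₀ hun.ne']
      have hle : N p ≤ N (‖u‖⁻¹ • u) := hmin hmem
      rw [hN_smul, abs_of_pos (inv_pos.mpr hun)] at hle
      have := mul_le_mul_of_nonneg_right hle (norm_nonneg u)
      have heq : ‖u‖⁻¹ * N u * ‖u‖ = N u := by field_simp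
      linarith

lemma aux_bddAbove (hN_add : ∀ u v, N (u + v) ≤ N u + N v)
    (hN_smul : ∀ (a : ℝ) u, N (a • u) = |a| * N u)
    (hN_zero : ∀ u, N u = 0 → u = 0) (y : EuclideanSpace ℝ (Fin d)) :
    BddAbove ((fun x => ⟪x, y⟫) '' {x | N x ≤ 1}) := by
  obtain ⟨c, hc, hcl⟩ := aux_N_lower hN_add hN_smul hN_zero
  refine ⟨c⁻¹ * ‖y‖, ?_⟩
  rintro r ⟨v, hv, rfl⟩
  have h1 : ⟪v, y⟫ ≤ ‖v‖ * ‖y‖ := real_inner_le_norm v y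
  have h2 : ‖v‖ ≤ c⁻¹ := by
    have h3 : c * ‖v‖ ≤ 1 := (hcl v).trans hv
    have h4 : c * ‖v‖ ≤ c * c⁻¹ := by
      rw [mul_inv_cancel₀ hc.ne']
      exact h3
    exact le_of_mul_le_mul_left h4 hc
  calc ⟪v, y⟫ ≤ ‖v‖ * ‖y‖ := h1
    _ ≤ c⁻¹ * ‖y‖ := mul_le_mul_of_nonneg_right h2 (norm_nonneg y)

lemma aux_dual_nonneg (hN_add : ∀ u v, N (u + v) ≤ N u + N v)
    (hN_smul : ∀ (a : ℝ) u, N (a • u) = |a| * N u)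
    (hN_zero : ∀ u, N u = 0 → u = 0) (y : EuclideanSpace ℝ (Fin d)) :
    0 ≤ dualNorm N y := by
  refine le_csSup (aux_bddAbove hN_add hN_smul hN_zero y) ⟨0, ?_, ?_⟩
  · simp [aux_N_zero hN_smul]
  · simp

lemma aux_CS (hN_add : ∀ u v, N (u + v) ≤ N u + N v)
    (hN_smul : ∀ (a : ℝ) u, N (a • u) = |a| * N u)
    (hN_zero : ∀ u, N u = 0 → u = 0) (u y : EuclideanSpace ℝ (Fin d)) :
    ⟪u, y⟫ ≤ N u * dualNorm N y := by
  rcases (aux_N_nonneg hN_add hN_smul u).eq_or_lt with h | h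
  · have hu : u = 0 := hN_zero u h.symm
    subst hu
    simp [← h]
  · have hv : N ((N u)⁻¹ • u) ≤ 1 := by
      rw [hN_smul, abs_of_pos (inv_pos.mpr h), inv_mul_cancel₀ h.ne']
    have hle : ⟪(N u)⁻¹ • u, y⟫ ≤ dualNorm N y :=
      le_csSup (aux_bddAbove hN_add hN_smul hN_zero y) ⟨_, hv, rfl⟩
    rw [real_inner_smul_left] at hle
    calc ⟪u, y⟫ = N u * ((N u)⁻¹ * ⟪u, y⟫) := by field_simp
      _ ≤ N u * dualNorm N y := mul_le_mul_of_nonneg_left hle h.le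

lemma aux_strong_min {K : Set (EuclideanSpace ℝ (Fin d))} (hK : Convex ℝ K)
    (f : EuclideanSpace ℝ (Fin d) → ℝ) (σ : ℝ)
    (hconv : ∀ u ∈ K, ∀ v ∈ K, ∀ a : ℝ, 0 ≤ a → a ≤ 1 →
      f (a • u + (1 - a) • v) ≤ a * f u + (1 - a) * f v - σ / 2 * a * (1 - a) * (N (u - v)) ^ 2)
    (p : EuclideanSpace ℝ (Fin d)) (hp : p ∈ K) (hmin : ∀ w ∈ K, f p ≤ f w) :
    ∀ w ∈ K, f p + σ / 2 * (N (w - p)) ^ 2 ≤ f w := by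
  intro w hw
  have key : ∀ a : ℝ, 0 < a → a ≤ 1 → σ / 2 * (1 - a) * (N (w - p)) ^ 2 ≤ f w - f p := by
    intro a ha ha1
    have hmem : a • w + (1 - a) • p ∈ K := hK hw hp ha.le (by linarith) (by ring)
    have h1 := hconv w hw p hp a ha.le ha1
    have h2 := hmin _ hmem
    have h3 : a * (σ / 2 * (1 - a) * (N (w - p)) ^ 2) ≤ a * (f w - f p) := by nlinarith
    exact le_of_mul_le_mul_left h3 ha
  have hten : Filter.Tendsto (fun a : ℝ => σ / 2 * (1 - a) * (N (w - p)) ^ 2)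
      (nhdsWithin 0 (Set.Ioi 0)) (nhds (σ / 2 * (1 - (0:ℝ)) * (N (w - p)) ^ 2)) := by
    apply Filter.Tendsto.mono_left _ nhdsWithin_le_nhds
    have hcont : Continuous (fun a : ℝ => σ / 2 * (1 - a) * (N (w - p)) ^ 2) := by continuity
    exact hcont.tendsto 0
  have hev : ∀ᶠ a in nhdsWithin (0:ℝ) (Set.Ioi 0),
      σ / 2 * (1 - a) * (N (w - p)) ^ 2 ≤ f w - f p := by
    filter_upwards [Ioo_mem_nhdsGT_of_mem (by constructor <;> norm_num : (0:ℝ) ∈ Set.Ico (0:ℝ) 1)]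
      with a ha
    exact key a ha.1 ha.2.le
  have hfin := le_of_tendsto hten hev
  nlinarith [hfin]

end aux

lemma aux_Icc_range (n : ℕ) (f : ℕ → ℝ) :
    ∑ t ∈ Icc 1 n, f t = ∑ i ∈ range n, f (i + 1) := by
  induction n with
  | zero => simp
  | succ k ih =>
    rw [Finset.sum_Icc_succ_top (show 1 ≤ k + 1 by omega), ih, Finset.sum_range_succ]

/-- regret bound for Optimistic-FTRL with guesses `m_t`:
`Σ_t ⟪x_t - x*, θ_t⟫ ≤ (R(x*) - R(z_1) - D_T)/η + Σ_t (η/β)‖θ_t - m_t‖_*²`. -/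
theorem optimistic_ftrl_regret {d : ℕ}
    (K : Set (EuclideanSpace ℝ (Fin d))) (hK : Convex ℝ K)
    (N : EuclideanSpace ℝ (Fin d) → ℝ)
    -- N is a norm
    (hN_add : ∀ u v, N (u + v) ≤ N u + N v)
    (hN_smul : ∀ (a : ℝ) (u : EuclideanSpace ℝ (Fin d)), N (a • u) = |a| * N u)
    (hN_zero : ∀ u, N u = 0 → u = 0)
    -- R is β-strongly convex with respect to N on K
    (R : EuclideanSpace ℝ (Fin d) → ℝ) (β : ℝ) (hβ : 0 < β)
    (hR : ∀ u ∈ K, ∀ v ∈ K, ∀ a : ℝ, 0 ≤ a → a ≤ 1 →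
      R (a • u + (1 - a) • v)
        ≤ a * R u + (1 - a) * R v - β / 2 * a * (1 - a) * (N (u - v)) ^ 2)
    (η : ℝ) (hη : 0 < η)
    (T : ℕ)
    (θ m : ℕ → EuclideanSpace ℝ (Fin d))
    (Lvec : ℕ → EuclideanSpace ℝ (Fin d)) (hLvec : ∀ t, Lvec t = ∑ s ∈ Icc 1 t, θ s)
    -- the Optimistic-FTRL iterates x_t and the FTRL iterates z_t
    (x z : ℕ → EuclideanSpace ℝ (Fin d))
    (hx : ∀ t, 1 ≤ t → t ≤ T → x t ∈ K ∧ ∀ w ∈ K,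
      ⟪x t, Lvec (t - 1) + m t⟫ + (1 / η) * R (x t)
        ≤ ⟪w, Lvec (t - 1) + m t⟫ + (1 / η) * R w)
    (hzmem : ∀ t, 1 ≤ t → t ≤ T + 1 → z t ∈ K ∧ ∀ w ∈ K,
      ⟪z t, Lvec (t - 1)⟫ + (1 / η) * R (z t) ≤ ⟪w, Lvec (t - 1)⟫ + (1 / η) * R w)
    (D : ℝ)
    (hD : D = ∑ t ∈ Icc 1 T,
      (β / 2 * (N (x t - z t)) ^ 2 + β / 2 * (N (x t - z (t + 1))) ^ 2)) :
    ∀ xstar ∈ K,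
      ∑ t ∈ Icc 1 T, ⟪x t - xstar, θ t⟫
        ≤ (R xstar - R (z 1) - D) / η
          + ∑ t ∈ Icc 1 T, (η / β) * (dualNorm N (θ t - m t)) ^ 2 := by
  intro xstar hxstar
  have hη' : (0:ℝ) < 1 / η := by positivity
  -- strong convexity of a linear perturbation of R/η
  have hconvF : ∀ v : EuclideanSpace ℝ (Fin d), ∀ u ∈ K, ∀ w ∈ K, ∀ a : ℝ, 0 ≤ a → a ≤ 1 →
      ⟪a • u + (1 - a) • w, v⟫ + (1 / η) * R (a • u + (1 - a) • w)
        ≤ a * (⟪u, v⟫ + (1 / η) * R u) + (1 - a) * (⟪w, v⟫ + (1 / η) * R w)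
          - (β / η) / 2 * a * (1 - a) * (N (u - w)) ^ 2 := by
    intro v u hu w hw a ha ha1
    have hr := hR u hu w hw a ha ha1
    have hmul := mul_le_mul_of_nonneg_left hr hη'.le
    have heq : (1 / η) * (β / 2 * a * (1 - a) * (N (u - w)) ^ 2)
        = (β / η) / 2 * a * (1 - a) * (N (u - w)) ^ 2 := by
      field_simp
    rw [inner_add_left, real_inner_smul_left, real_inner_smul_left]
    nlinarith [hmul, heq]
  have hzstrong : ∀ t, 1 ≤ t → t ≤ T + 1 → ∀ w ∈ K,
      (⟪z t, Lvec (t - 1)⟫ + (1 / η) * R (z t)) + (β / η) / 2 * (N (w - z t)) ^ 2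
        ≤ ⟪w, Lvec (t - 1)⟫ + (1 / η) * R w := by
    intro t h1 h2
    exact aux_strong_min hK (fun y => ⟪y, Lvec (t - 1)⟫ + (1 / η) * R y) (β / η)
      (fun u hu w hw a ha ha1 => hconvF (Lvec (t - 1)) u hu w hw a ha ha1)
      (z t) (hzmem t h1 h2).1 (hzmem t h1 h2).2
  have hxstrong : ∀ t, 1 ≤ t → t ≤ T → ∀ w ∈ K,
      (⟪x t, Lvec (t - 1) + m t⟫ + (1 / η) * R (x t)) + (β / η) / 2 * (N (w - x t)) ^ 2
        ≤ ⟪w, Lvec (t - 1) + m t⟫ + (1 / η) * R w := by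
    intro t h1 h2
    exact aux_strong_min hK (fun y => ⟪y, Lvec (t - 1) + m t⟫ + (1 / η) * R y) (β / η)
      (fun u hu w hw a ha ha1 => hconvF (Lvec (t - 1) + m t) u hu w hw a ha ha1)
      (x t) (hx t h1 h2).1 (hx t h1 h2).2
  have hLstep : ∀ i : ℕ, Lvec (i + 1) = Lvec i + θ (i + 1) := by
    intro i
    rw [hLvec, hLvec, Finset.sum_Icc_succ_top (show 1 ≤ i + 1 by omega)]
  have hL0 : Lvec 0 = 0 := by rw [hLvec]; simp
  -- the per-step inequality
  have hstep : ∀ i ∈ range T,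
      ⟪x (i+1), θ (i+1)⟫ +
        ((⟪z (i+1), Lvec i⟫ + (1 / η) * R (z (i+1)))
          - (⟪z (i+1+1), Lvec (i+1)⟫ + (1 / η) * R (z (i+1+1))))
      ≤ (η / β) * (dualNorm N (θ (i+1) - m (i+1))) ^ 2
        - (1 / η) * (β / 2 * (N (x (i+1) - z (i+1))) ^ 2
            + β / 2 * (N (x (i+1) - z (i+1+1))) ^ 2) := by
    intro i hi
    rw [Finset.mem_range] at hi
    obtain ⟨hxtK, -⟩ := hx (i+1) (by omega) (by omega)
    obtain ⟨hztK, -⟩ := hzmem (i+1) (by omega) (by omega)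
    obtain ⟨hzt1K, -⟩ := hzmem (i+1+1) (by omega) (by omega)
    have e1 := hxstrong (i+1) (by omega) (by omega) (z (i+1+1)) hzt1K
    have e2 := hzstrong (i+1+1) (by omega) (by omega) (x (i+1)) hxtK
    have e3 := hzstrong (i+1) (by omega) (by omega) (x (i+1)) hxtK
    simp only [Nat.add_sub_cancel] at e1 e2 e3
    have hnb : N (z (i+1+1) - x (i+1)) = N (x (i+1) - z (i+1+1)) := by
      rw [← neg_sub (x (i+1)) (z (i+1+1)), aux_N_neg hN_smul]
    rw [hnb] at e1
    rw [hLstep i] at e2 ⊢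
    simp only [inner_add_right] at e1 e2 ⊢
    have e4 : ⟪x (i+1) - z (i+1+1), θ (i+1) - m (i+1)⟫
        ≤ N (x (i+1) - z (i+1+1)) * dualNorm N (θ (i+1) - m (i+1)) :=
      aux_CS hN_add hN_smul hN_zero _ _
    rw [inner_sub_left, inner_sub_right, inner_sub_right] at e4
    have eX : (0:ℝ) ≤ (η / β) * (dualNorm N (θ (i+1) - m (i+1))
        - (β / η) * N (x (i+1) - z (i+1+1))) ^ 2 := by positivity
    have eXeq : (η / β) * (dualNorm N (θ (i+1) - m (i+1))
          - (β / η) * N (x (i+1) - z (i+1+1))) ^ 2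
        = (η / β) * (dualNorm N (θ (i+1) - m (i+1))) ^ 2
          - 2 * (N (x (i+1) - z (i+1+1)) * dualNorm N (θ (i+1) - m (i+1)))
          + (β / η) * (N (x (i+1) - z (i+1+1))) ^ 2 := by
      field_simp
      ring
    have heq2 : (1 / η) * (β / 2 * (N (x (i+1) - z (i+1))) ^ 2
          + β / 2 * (N (x (i+1) - z (i+1+1))) ^ 2)
        = (β / η) / 2 * (N (x (i+1) - z (i+1))) ^ 2
          + (β / η) / 2 * (N (x (i+1) - z (i+1+1))) ^ 2 := by
      field_simp
    linarith [e1, e2, e3, e4, eX, eXeq, heq2]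
  -- telescoping
  have tele : ∑ i ∈ range T,
      ((⟪z (i+1), Lvec i⟫ + (1 / η) * R (z (i+1)))
        - (⟪z (i+1+1), Lvec (i+1)⟫ + (1 / η) * R (z (i+1+1))))
      = (⟪z 1, Lvec 0⟫ + (1 / η) * R (z 1))
        - (⟪z (T+1), Lvec T⟫ + (1 / η) * R (z (T+1))) :=
    Finset.sum_range_sub' (fun i => ⟪z (i+1), Lvec i⟫ + (1 / η) * R (z (i+1))) T
  have hsum := Finset.sum_le_sum hstep
  rw [Finset.sum_add_distrib, tele, Finset.sum_sub_distrib, ← Finset.mul_sum, ← Finset.mul_sum] at hsum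
  rw [hL0, inner_zero_right] at hsum
  have hDr : D = ∑ i ∈ range T, (β / 2 * (N (x (i+1) - z (i+1))) ^ 2
      + β / 2 * (N (x (i+1) - z (i+1+1))) ^ 2) := by
    rw [hD, aux_Icc_range]
  have hgT : ⟪z (T+1), Lvec T⟫ + (1 / η) * R (z (T+1))
      ≤ ⟪xstar, Lvec T⟫ + (1 / η) * R xstar := by
    have h := (hzmem (T+1) (by omega) le_rfl).2 xstar hxstar
    simpa only [Nat.add_sub_cancel] using h
  rw [aux_Icc_range T (fun t => ⟪x t - xstar, θ t⟫), aux_Icc_range T]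
  simp only [inner_sub_left]
  rw [Finset.sum_sub_distrib]
  have hxs : ∑ i ∈ range T, ⟪xstar, θ (i+1)⟫ = ⟪xstar, Lvec T⟫ := by
    rw [hLvec, inner_sum, aux_Icc_range]
  rw [hxs]
  have hdiv : (R xstar - R (z 1) - D) / η
      = (1 / η) * R xstar - (1 / η) * R (z 1) - (1 / η) * D := by ring
  rw [hdiv, hDr, ← Finset.mul_sum]
  linarith [hsum, hgT]
end

section
/- Let 𝒦 ⊆ ℝ^d be convex, let φ : ℝ^d → ℝ be differentiable with Bregman divergence V_c(x) = φ(x) − ⟨∇φ(c), x − c⟩ − φ(c), let c ∈ 𝒦 and y ∈ ℝ^d, and let x⁺ = argmin_{x ∈ 𝒦} [⟨x, y⟩ + V_c(x)]. Then for every x* ∈ 𝒦, ⟨x⁺ − x*, y⟩ ≤ V_c(x*) − V_{x⁺}(x*) − V_c(x⁺). -/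
open scoped RealInnerProductSpace

open Filter Topology

private lemma fderiv_apply_eq_inner_gradient {d : ℕ}
    (φ : EuclideanSpace ℝ (Fin d) → ℝ) (hφ : Differentiable ℝ φ)
    (x u : EuclideanSpace ℝ (Fin d)) :
    fderiv ℝ φ x u = ⟪gradient φ x, u⟫ := by
  have h := (hφ x).hasGradientAt
  have h2 : fderiv ℝ φ x = InnerProductSpace.toDual ℝ _ (gradient φ x) :=
    h.hasFDerivAt.fderiv
  rw [h2, InnerProductSpace.toDual_apply_apply]

/-- Lemma 1 of Rakhlin–Sridharan 2013: one-step Mirror-Descent inequality.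
If `x⁺` minimizes `x ↦ ⟪x, y⟫ + V_c(x)` over the convex set `𝒦`, then for every `x* ∈ 𝒦`,
`⟪x⁺ - x*, y⟫ ≤ V_c(x*) - V_{x⁺}(x*) - V_c(x⁺)`. -/
theorem mirror_descent_one_step {d : ℕ}
    (K : Set (EuclideanSpace ℝ (Fin d))) (hK : Convex ℝ K)
    (φ : EuclideanSpace ℝ (Fin d) → ℝ) (hφ : Differentiable ℝ φ)
    (V : EuclideanSpace ℝ (Fin d) → EuclideanSpace ℝ (Fin d) → ℝ)
    (hV : ∀ c x, V c x = φ x - ⟪gradient φ c, x - c⟫ - φ c)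
    (c : EuclideanSpace ℝ (Fin d)) (hc : c ∈ K)
    (y : EuclideanSpace ℝ (Fin d))
    (xplus : EuclideanSpace ℝ (Fin d)) (hmem : xplus ∈ K)
    (hopt : ∀ w ∈ K, ⟪xplus, y⟫ + V c xplus ≤ ⟪w, y⟫ + V c w) :
    ∀ xstar ∈ K, ⟪xplus - xstar, y⟫ ≤ V c xstar - V xplus xstar - V c xplus := by
  intro xstar hstar
  set u : EuclideanSpace ℝ (Fin d) := xstar - xplus with hu
  set gc := gradient φ c with hgc
  set gp := gradient φ xplus with hgp
  -- the objective along the segment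
  set g : ℝ → ℝ := fun t => ⟪xplus + t • u, y⟫ + V c (xplus + t • u) with hg
  -- derivative of g at 0
  set D : ℝ := ⟪u, y⟫ + ⟪gp, u⟫ - ⟪gc, u⟫ with hD
  have hline : ∀ t : ℝ, HasDerivAt (fun t : ℝ => xplus + t • u) u t := by
    intro t
    simpa using ((hasDerivAt_id t).smul_const u).const_add xplus
  have hgderiv : HasDerivAt g D 0 := by
    have h1 : HasDerivAt (fun t : ℝ => ⟪xplus + t • u, y⟫) ⟪u, y⟫ 0 := by
      have : (fun t : ℝ => ⟪xplus + t • u, y⟫) =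
          fun t : ℝ => ⟪xplus, y⟫ + t * ⟪u, y⟫ := by
        funext t; rw [inner_add_left, real_inner_smul_left]
      rw [this]
      simpa using ((hasDerivAt_id (0:ℝ)).mul_const ⟪u, y⟫).const_add ⟪xplus, y⟫
    have h2 : HasDerivAt (fun t : ℝ => φ (xplus + t • u)) ⟪gp, u⟫ 0 := by
      have hcomp := (hφ (xplus + (0:ℝ) • u)).hasFDerivAt.comp_hasDerivAt 0 (hline 0)
      simp only [zero_smul, add_zero] at hcomp
      rwa [fderiv_apply_eq_inner_gradient φ hφ xplus u] at hcomp
    have h3 : HasDerivAt (fun t : ℝ => ⟪gc, xplus + t • u - c⟫) ⟪gc, u⟫ 0 := by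
      have : (fun t : ℝ => ⟪gc, xplus + t • u - c⟫) =
          fun t : ℝ => ⟪gc, xplus - c⟫ + t * ⟪gc, u⟫ := by
        funext t
        have : xplus + t • u - c = (xplus - c) + t • u := by abel
        rw [this, inner_add_right, real_inner_smul_right]
      rw [this]
      simpa using ((hasDerivAt_id (0:ℝ)).mul_const ⟪gc, u⟫).const_add ⟪gc, xplus - c⟫
    have : g = fun t => (⟪xplus + t • u, y⟫ + (φ (xplus + t • u) -
        ⟪gc, xplus + t • u - c⟫ - φ c)) := by
      funext t; rw [hg]; simp only [hV, ← hgc]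
    rw [this, hD]
    have := (h1.add ((h2.sub h3).sub_const (φ c)))
    exact this.congr_deriv (by ring)
  -- g 0 ≤ g t for t ∈ [0,1]
  have hmin : ∀ t ∈ Set.Icc (0:ℝ) 1, g 0 ≤ g t := by
    intro t ht
    have hmemK : xplus + t • u ∈ K := by
      have := hK hmem hstar (by linarith [ht.1, ht.2] : (0:ℝ) ≤ 1 - t) ht.1 (by ring)
      have heq : (1 - t) • xplus + t • xstar = xplus + t • u := by
        rw [hu]; module
      rwa [heq] at this
    have := hopt _ hmemK
    simpa [hg] using this
  -- derivative nonneg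
  have hDnonneg : 0 ≤ D := by
    have hslope : Tendsto (slope g 0) (𝓝[>] 0) (𝓝 D) := by
      have := hgderiv.hasDerivWithinAt (s := Set.Ioi (0:ℝ))
      rw [hasDerivWithinAt_iff_tendsto_slope] at this
      exact this.mono_left (nhdsWithin_mono _ (by simp [Set.subset_def]))
    refine ge_of_tendsto hslope ?_
    filter_upwards [Ioo_mem_nhdsGT_of_mem (Set.left_mem_Ico.2 one_pos)] with t ht
    have h01 : g 0 ≤ g t := hmin t ⟨le_of_lt ht.1, le_of_lt ht.2⟩
    rw [slope_def_field]
    exact div_nonneg (by linarith) (by linarith [ht.1])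
  -- conclude
  rw [hV, hV, hV]
  have e1 : ⟪xplus - xstar, y⟫ = -⟪u, y⟫ := by
    rw [hu, ← inner_neg_left]; congr 1; abel
  have e2 : ⟪gp, xstar - xplus⟫ = ⟪gp, u⟫ := by rw [hu]
  have e3 : ⟪gc, xstar - c⟫ - ⟪gc, xplus - c⟫ = ⟪gc, u⟫ := by
    rw [hu, ← inner_sub_right]; congr 1; abel
  rw [e1, e2]
  nlinarith [hDnonneg, e3]
end

section
/- Let 𝒦 ⊆ ℝ^d be convex, let φ : ℝ^d → ℝ be differentiable with Bregman divergence V_c(x) = φ(x) − ⟨∇φ(c), x − c⟩ − φ(c), let θ : 𝒦 → ℝ be a convex function, let c ∈ 𝒦, and let x⁺ = argmin_{x ∈ 𝒦} [θ(x) + V_c(x)]. Then for every x* ∈ 𝒦, θ(x⁺) − θ(x*) ≤ V_c(x*) − V_{x⁺}(x*) − V_c(x⁺). -/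
open scoped RealInnerProductSpace

/-- Property 1 of Tseng 2008: composite one-step Mirror-Descent inequality.
If `x⁺` minimizes `x ↦ θ(x) + V_c(x)` over the convex set `𝒦` for a convex `θ`, then for
every `x* ∈ 𝒦`, `θ(x⁺) - θ(x*) ≤ V_c(x*) - V_{x⁺}(x*) - V_c(x⁺)`. -/
theorem composite_mirror_descent_one_step {d : ℕ}
    (K : Set (EuclideanSpace ℝ (Fin d))) (hK : Convex ℝ K)
    (φ : EuclideanSpace ℝ (Fin d) → ℝ) (hφ : Differentiable ℝ φ)
    (V : EuclideanSpace ℝ (Fin d) → EuclideanSpace ℝ (Fin d) → ℝ)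
    (hV : ∀ c x, V c x = φ x - ⟪gradient φ c, x - c⟫ - φ c)
    (θ : EuclideanSpace ℝ (Fin d) → ℝ) (hθ : ConvexOn ℝ K θ)
    (c : EuclideanSpace ℝ (Fin d)) (hc : c ∈ K)
    (xplus : EuclideanSpace ℝ (Fin d)) (hmem : xplus ∈ K)
    (hopt : ∀ w ∈ K, θ xplus + V c xplus ≤ θ w + V c w) :
    ∀ xstar ∈ K, θ xplus - θ xstar ≤ V c xstar - V xplus xstar - V c xplus := by
  intro xstar hxstar
  set v := xstar - xplus with hv
  set gp := gradient φ xplus with hgp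
  set gc := gradient φ c with hgc
  -- three-point identity
  have hident : V c xstar - V xplus xstar - V c xplus = ⟪gp, v⟫ - ⟪gc, v⟫ := by
    rw [hV, hV, hV, hv]
    have h1 : xstar - c = (xstar - xplus) + (xplus - c) := by abel
    rw [h1, inner_add_right]
    ring
  rw [hident]
  -- derivative of g t = φ (xplus + t • v) at 0 is ⟪gp, v⟫
  set g : ℝ → ℝ := fun t => φ (xplus + t • v) with hg
  have hline : HasDerivAt (fun t : ℝ => xplus + t • v) v 0 := by
    simpa using ((hasDerivAt_id (0:ℝ)).smul_const v).const_add xplus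
  have hgrad : HasGradientAt φ gp xplus := (hφ xplus).hasGradientAt
  have hd : HasDerivAt g ⟪gp, v⟫ 0 := by
    have hF : HasFDerivAt φ ((InnerProductSpace.toDual ℝ _) gp) (xplus + (0:ℝ) • v) := by
      simpa using hgrad.hasFDerivAt
    have := hF.comp_hasDerivAt (x := (0:ℝ)) hline
    simp [InnerProductSpace.toDual_apply_apply] at this
    exact this
  have hslope : Filter.Tendsto (fun t : ℝ => (g t - g 0) / t) (nhdsWithin 0 (Set.Ioi 0))
      (nhds ⟪gp, v⟫) := by
    have := hasDerivAt_iff_tendsto_slope.mp hd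
    have h2 : Filter.Tendsto (slope g 0) (nhdsWithin 0 (Set.Ioi 0)) (nhds ⟪gp, v⟫) :=
      this.mono_left (nhdsWithin_mono _ (by intro x hx; simpa using ne_of_gt hx))
    refine h2.congr' ?_
    filter_upwards [self_mem_nhdsWithin] with t ht
    simp [slope_def_field, div_eq_inv_mul]
  -- eventual inequality
  have hev : ∀ᶠ t in nhdsWithin (0:ℝ) (Set.Ioi 0),
      θ xplus - θ xstar + ⟪gc, v⟫ ≤ (g t - g 0) / t := by
    filter_upwards [Ioo_mem_nhdsGT_of_mem (by norm_num : (0:ℝ) ∈ Set.Ico 0 1)] with t ht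
    obtain ⟨ht0, ht1⟩ := ht
    set w := xplus + t • v with hw
    have hwK : w ∈ K := by
      have := hK hmem hxstar (by linarith : (0:ℝ) ≤ 1 - t) (le_of_lt ht0) (by ring)
      have heq : (1 - t) • xplus + t • xstar = w := by
        rw [hw, hv]; module
      rwa [heq] at this
    have h1 : θ xplus + V c xplus ≤ θ w + V c w := hopt w hwK
    have h2 : θ w ≤ (1 - t) * θ xplus + t * θ xstar := by
      have := hθ.2 hmem hxstar (by linarith : (0:ℝ) ≤ 1 - t) (le_of_lt ht0) (by ring)
      have heq : (1 - t) • xplus + t • xstar = w := by rw [hw, hv]; module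
      rwa [heq] at this
    have h3 : V c w - V c xplus = φ w - φ xplus - t * ⟪gc, v⟫ := by
      rw [hV, hV]
      have : w - c = t • v + (xplus - c) := by rw [hw]; abel
      rw [this, inner_add_right, real_inner_smul_right]
      ring
    have h4 : t * (θ xplus - θ xstar) ≤ φ w - φ xplus - t * ⟪gc, v⟫ := by
      rw [← h3]; nlinarith
    have hg0 : g 0 = φ xplus := by simp [g]
    have hgt : g t = φ w := by rw [hg, hw]
    rw [hgt, hg0, le_div_iff₀ ht0]
    nlinarith
  have := ge_of_tendsto hslope hev
  linarith
end
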